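/- arXiv:1910.07358 — 5 statements merged into one kernel-verified Lean document; each statement's English description precedes it below -/
import Mathlib

section
/- Let 0 < s < 1, h > 0 and n ∈ ℤ with n ≠ 0. Then K^s_h(n) = −R^s_h(n), i.e. (−1)^n Γ(2s+1)/(Γ(1+s+n) Γ(1+s−n) h^{2s}) = − (4^s Γ(1/2+s) s/(√π Γ(1−s))) · Γ(|n|−s)/(h^{2s} Γ(|n|+1+s)). -/
/-- The kernel of the discrete fractional Laplacian on the mesh `ℤ_h`:
`K^s_h(n) = (-1)^n Γ(2s+1)/(Γ(1+s+n) Γ(1+s-n) h^{2s})`. -/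
noncomputable def Ksh (s h : ℝ) (n : ℤ) : ℝ :=
  (-1 : ℝ) ^ n * Real.Gamma (2 * s + 1) /
    (Real.Gamma (1 + s + (n : ℝ)) * Real.Gamma (1 + s - (n : ℝ)) * h ^ (2 * s))

/-- The kernel `R^s_h`, vanishing at `0`. -/
noncomputable def Rsh (s h : ℝ) (m : ℤ) : ℝ :=
  if m = 0 then 0
  else (4 : ℝ) ^ s * Real.Gamma (1 / 2 + s) * s / (Real.sqrt Real.pi * Real.Gamma (1 - s)) *
    (Real.Gamma (((|m| : ℤ) : ℝ) - s) / (h ^ (2 * s) * Real.Gamma (((|m| : ℤ) : ℝ) + 1 + s)))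

/-- Auxiliary constant identity: `4^s Γ(1/2+s) s / (√π Γ(1-s)) · π = Γ(2s+1) sin(πs)`. -/
theorem Ksh_aux_const (s : ℝ) (hs0 : 0 < s) (hs1 : s < 1) :
    (4 : ℝ) ^ s * Real.Gamma (1 / 2 + s) * s / (Real.sqrt Real.pi * Real.Gamma (1 - s)) * Real.pi
      = Real.Gamma (2 * s + 1) * Real.sin (Real.pi * s) := by
  have hsin : 0 < Real.sin (Real.pi * s) :=
    Real.sin_pos_of_pos_of_lt_pi (by positivity) (by nlinarith [Real.pi_pos])
  have hGs : 0 < Real.Gamma s := Real.Gamma_pos_of_pos hs0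
  have hG1s : 0 < Real.Gamma (1 - s) := Real.Gamma_pos_of_pos (by linarith)
  have hsqrt : 0 < Real.sqrt Real.pi := Real.sqrt_pos.mpr Real.pi_pos
  have hrec : Real.Gamma (2 * s + 1) = 2 * s * Real.Gamma (2 * s) := by
    rw [Real.Gamma_add_one (by positivity)]
  have hdup := Real.Gamma_mul_Gamma_add_half s
  have hrefl' : Real.Gamma s * Real.Gamma (1 - s) * Real.sin (Real.pi * s) = Real.pi := by
    rw [Real.Gamma_mul_Gamma_one_sub s]; field_simp
  have h4 : (4 : ℝ) ^ s * (2 : ℝ) ^ (1 - 2 * s) = 2 := by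
    have h44 : (4 : ℝ) ^ s = (2 : ℝ) ^ (2 * s) := by
      rw [show (4 : ℝ) = (2 : ℝ) ^ (2 : ℝ) by
        rw [show (2:ℝ) = ((2:ℕ):ℝ) by norm_num, Real.rpow_natCast]; norm_num,
        ← Real.rpow_mul (by norm_num)]
    rw [h44, ← Real.rpow_add (by norm_num)]
    norm_num
  have hhc : Real.Gamma (s + 1/2) = Real.Gamma (1/2 + s) := by ring_nf
  rw [hhc] at hdup
  rw [hrec, div_mul_eq_mul_div, div_eq_iff (by positivity)]
  linear_combination (-((4:ℝ)^s * Real.Gamma (1/2+s) * s)) * hrefl'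
    + (s * Real.Gamma (1-s) * Real.sin (Real.pi*s) * (4:ℝ)^s) * hdup
    + (s * Real.Gamma (1-s) * Real.sin (Real.pi*s) * Real.Gamma (2*s) * Real.sqrt Real.pi) * h4

/-- The key identity for natural numbers `m ≥ 1`. -/
theorem Ksh_aux_key (s : ℝ) (hs0 : 0 < s) (hs1 : s < 1) (h : ℝ) (hh : 0 < h)
    (m : ℕ) (hm : 1 ≤ m) :
    (-1 : ℝ) ^ m * Real.Gamma (2 * s + 1) /
        (Real.Gamma (1 + s + (m : ℝ)) * Real.Gamma (1 + s - (m : ℝ)) * h ^ (2 * s)) =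
      -((4 : ℝ) ^ s * Real.Gamma (1 / 2 + s) * s / (Real.sqrt Real.pi * Real.Gamma (1 - s)) *
        (Real.Gamma ((m : ℝ) - s) / (h ^ (2 * s) * Real.Gamma ((m : ℝ) + 1 + s)))) := by
  have hA := Ksh_aux_const s hs0 hs1
  have hm1 : (1 : ℝ) ≤ (m : ℝ) := by exact_mod_cast hm
  have hsin : 0 < Real.sin (Real.pi * s) :=
    Real.sin_pos_of_pos_of_lt_pi (by positivity) (by nlinarith [Real.pi_pos])
  have hA' : 0 < Real.Gamma ((m : ℝ) - s) := Real.Gamma_pos_of_pos (by linarith)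
  have hB : 0 < Real.Gamma (1 + s + (m : ℝ)) := Real.Gamma_pos_of_pos (by linarith)
  have hH : 0 < h ^ (2 * s) := Real.rpow_pos_of_pos hh _
  have hBc : Real.Gamma ((m : ℝ) + 1 + s) = Real.Gamma (1 + s + (m : ℝ)) := by ring_nf
  have hsqrt : 0 < Real.sqrt Real.pi := Real.sqrt_pos.mpr Real.pi_pos
  have hG1s : 0 < Real.Gamma (1 - s) := Real.Gamma_pos_of_pos (by linarith)
  have hsv : Real.sin (Real.pi * ((m : ℝ) - s)) = -((-1 : ℝ) ^ m * Real.sin (Real.pi * s)) := by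
    rw [show Real.pi * ((m : ℝ) - s) = (m : ℝ) * Real.pi - Real.pi * s by ring,
      Real.sin_nat_mul_pi_sub]
  have hrefl := Real.Gamma_mul_Gamma_one_sub ((m : ℝ) - s)
  rw [show (1 : ℝ) - ((m : ℝ) - s) = 1 + s - (m : ℝ) by ring, hsv] at hrefl
  have hm2 : ((-1 : ℝ) ^ m) * ((-1 : ℝ) ^ m) = 1 := by
    rw [← pow_add]; exact Even.neg_one_pow ⟨m, rfl⟩
  have hpi : (0:ℝ) < Real.pi := Real.pi_pos
  rw [hBc]
  generalize Real.Gamma (2*s+1) = G21 at *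
  generalize Real.Gamma (1/2+s) = Gh at *
  generalize Real.Gamma (1-s) = G1 at *
  generalize Real.Gamma ((m:ℝ) - s) = GA at *
  generalize Real.Gamma (1+s+(m:ℝ)) = GB at *
  generalize Real.Gamma (1+s-(m:ℝ)) = GC at *
  generalize (h : ℝ) ^ (2*s) = H at *
  generalize Real.sin (Real.pi * s) = sp at *
  generalize ((-1:ℝ)) ^ m = e at *
  generalize (4:ℝ) ^ s = F4 at *
  have he : e ≠ 0 := by intro hc; rw [hc, zero_mul] at hm2; norm_num at hm2
  have hsv0 : -(e * sp) ≠ 0 := by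
    simp only [neg_ne_zero]; exact mul_ne_zero he hsin.ne'
  have hGC : GC = Real.pi / -(e * sp) / GA := by
    field_simp at hrefl ⊢
    linarith [hrefl]
  have hC : F4 * Gh * s / (Real.sqrt Real.pi * G1) = G21 * sp / Real.pi := by
    rw [eq_div_iff hpi.ne']; exact hA
  rw [hGC, hC]
  field_simp
  ring_nf
  linear_combination (-G21) * hm2

/-- For `n ≠ 0`, `K^s_h(n) = -R^s_h(n)`. -/
theorem Ksh_eq_neg_Rsh (s : ℝ) (hs0 : 0 < s) (hs1 : s < 1) (h : ℝ) (hh : 0 < h)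
    (n : ℤ) (hn : n ≠ 0) :
    Ksh s h n = -Rsh s h n ∧
    (-1 : ℝ) ^ n * Real.Gamma (2 * s + 1) /
        (Real.Gamma (1 + s + (n : ℝ)) * Real.Gamma (1 + s - (n : ℝ)) * h ^ (2 * s)) =
      -((4 : ℝ) ^ s * Real.Gamma (1 / 2 + s) * s / (Real.sqrt Real.pi * Real.Gamma (1 - s)) *
        (Real.Gamma (((|n| : ℤ) : ℝ) - s) /
          (h ^ (2 * s) * Real.Gamma (((|n| : ℤ) : ℝ) + 1 + s)))) := by
  have hm : 1 ≤ n.natAbs := Int.natAbs_pos.mpr hn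
  have habs : ((|n| : ℤ) : ℝ) = (n.natAbs : ℝ) := by
    rw [Nat.cast_natAbs, Int.cast_abs]
  have hE : (-1 : ℝ) ^ n * Real.Gamma (2 * s + 1) /
        (Real.Gamma (1 + s + (n : ℝ)) * Real.Gamma (1 + s - (n : ℝ)) * h ^ (2 * s)) =
      -((4 : ℝ) ^ s * Real.Gamma (1 / 2 + s) * s / (Real.sqrt Real.pi * Real.Gamma (1 - s)) *
        (Real.Gamma (((|n| : ℤ) : ℝ) - s) /
          (h ^ (2 * s) * Real.Gamma (((|n| : ℤ) : ℝ) + 1 + s)))) := by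
    obtain ⟨m, hmeq⟩ : ∃ m : ℕ, n.natAbs = m := ⟨_, rfl⟩
    rw [hmeq] at hm
    rw [habs, hmeq]
    rcases Int.natAbs_eq n with he | he <;> rw [hmeq] at he
    · rw [he, zpow_natCast, Int.cast_natCast]
      exact Ksh_aux_key s hs0 hs1 h hh m hm
    · rw [he, zpow_neg, zpow_natCast, ← inv_pow, Int.cast_neg, Int.cast_natCast]
      norm_num
      rw [show (1:ℝ) + s + -(m : ℝ) = 1 + s - (m : ℝ) by ring,
        mul_comm (Real.Gamma (1 + s - (m : ℝ))) (Real.Gamma (1 + s + (m : ℝ)))]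
      exact Ksh_aux_key s hs0 hs1 h hh m hm
  refine ⟨?_, hE⟩
  rw [Ksh, Rsh, if_neg hn]
  exact hE
end

section
/- Let 0 < s < 1. Then the series Σ_{n∈ℤ} (−1)^n Γ(2s+1)/(Γ(1+s+n) Γ(1+s−n)) converges absolutely and its sum equals 0. Equivalently, Σ_{n∈ℤ} K^s_h(n) = 0 for every h > 0; in particular the discrete fractional Laplacian annihilates constant functions. -/
open Real Filter Finset

noncomputable def fker (s : ℝ) (n : ℤ) : ℝ :=
  (-1 : ℝ) ^ n * Real.Gamma (2 * s + 1) /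
    (Real.Gamma (1 + s + (n : ℝ)) * Real.Gamma (1 + s - (n : ℝ)))

noncomputable def gker (s : ℝ) (n : ℕ) : ℝ :=
  Real.Gamma ((n : ℝ) + 1 - s) / Real.Gamma ((n : ℝ) + 2 + s)

noncomputable def Dker (s : ℝ) (n : ℕ) : ℝ :=
  Real.Gamma ((n : ℝ) + 1 - s) / Real.Gamma ((n : ℝ) + 1 + s)

lemma Dker_pos {s : ℝ} (hs1 : s < 1) (hs0 : 0 < s) (n : ℕ) : 0 < Dker s n := by
  have h1 : (0:ℝ) < (n : ℝ) + 1 - s := by have := (n.cast_nonneg : (0:ℝ) ≤ n); linarith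
  have h2 : (0:ℝ) < (n : ℝ) + 1 + s := by have := (n.cast_nonneg : (0:ℝ) ≤ n); linarith
  exact div_pos (Real.Gamma_pos_of_pos h1) (Real.Gamma_pos_of_pos h2)

lemma gker_pos {s : ℝ} (hs1 : s < 1) (hs0 : 0 < s) (n : ℕ) : 0 < gker s n := by
  have h1 : (0:ℝ) < (n : ℝ) + 1 - s := by have := (n.cast_nonneg : (0:ℝ) ≤ n); linarith
  have h2 : (0:ℝ) < (n : ℝ) + 2 + s := by have := (n.cast_nonneg : (0:ℝ) ≤ n); linarith
  exact div_pos (Real.Gamma_pos_of_pos h1) (Real.Gamma_pos_of_pos h2)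

lemma gker_eq {s : ℝ} (hs1 : s < 1) (hs0 : 0 < s) (n : ℕ) :
    gker s n = Dker s n / ((n : ℝ) + 1 + s) := by
  have h2 : (0:ℝ) < (n : ℝ) + 1 + s := by have := (n.cast_nonneg : (0:ℝ) ≤ n); linarith
  have hg : Real.Gamma ((n : ℝ) + 2 + s) = ((n:ℝ) + 1 + s) * Real.Gamma ((n : ℝ) + 1 + s) := by
    rw [show (n : ℝ) + 2 + s = ((n:ℝ) + 1 + s) + 1 by ring, Real.Gamma_add_one h2.ne']
  rw [gker, Dker, hg, div_div, mul_comm]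

lemma Dker_tele {s : ℝ} (hs1 : s < 1) (hs0 : 0 < s) (n : ℕ) :
    Dker s n - Dker s (n + 1) = 2 * s * gker s n := by
  have h1 : (0:ℝ) < (n : ℝ) + 1 - s := by have := (n.cast_nonneg : (0:ℝ) ≤ n); linarith
  have h2 : (0:ℝ) < (n : ℝ) + 1 + s := by have := (n.cast_nonneg : (0:ℝ) ≤ n); linarith
  have hG1 : (0:ℝ) < Real.Gamma ((n : ℝ) + 1 + s) := Real.Gamma_pos_of_pos h2
  have hgas : Real.Gamma ((n : ℝ) + 2 + s) = ((n:ℝ) + 1 + s) * Real.Gamma ((n : ℝ) + 1 + s) := by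
    rw [show (n : ℝ) + 2 + s = ((n:ℝ) + 1 + s) + 1 by ring, Real.Gamma_add_one h2.ne']
  have hgms : Real.Gamma ((n : ℝ) + 2 - s) = ((n:ℝ) + 1 - s) * Real.Gamma ((n : ℝ) + 1 - s) := by
    rw [show (n : ℝ) + 2 - s = ((n:ℝ) + 1 - s) + 1 by ring, Real.Gamma_add_one h1.ne']
  have hc : ((n + 1 : ℕ) : ℝ) = (n : ℝ) + 1 := by push_cast; ring
  rw [Dker, Dker, gker, hc, show (n:ℝ) + 1 + 1 - s = (n:ℝ) + 2 - s by ring,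
    show (n:ℝ) + 1 + 1 + s = (n:ℝ) + 2 + s by ring, hgms, hgas]
  field_simp
  ring

lemma hasSum_gker {s : ℝ} (hs1 : s < 1) (hs0 : 0 < s) :
    HasSum (gker s) (Dker s 0 / (2 * s)) := by
  have hanti : Antitone (Dker s) := by
    apply antitone_nat_of_succ_le
    intro n
    have := Dker_tele hs1 hs0 n
    have hg := gker_pos hs1 hs0 n
    nlinarith
  have hbdd : BddBelow (Set.range (Dker s)) := by
    refine ⟨0, ?_⟩
    rintro x ⟨n, rfl⟩
    exact (Dker_pos hs1 hs0 n).le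
  set L := ⨅ n, Dker s n with hL
  have hLle : ∀ n, L ≤ Dker s n := fun n => ciInf_le hbdd n
  have hL0 : 0 ≤ L := le_ciInf fun n => (Dker_pos hs1 hs0 n).le
  have hDtend : Tendsto (Dker s) atTop (nhds L) := tendsto_atTop_ciInf hanti hbdd
  have hpartial : ∀ N : ℕ, ∑ k ∈ Finset.range N, gker s k = (Dker s 0 - Dker s N) / (2 * s) := by
    intro N
    induction N with
    | zero => simp
    | succ N ih =>
      rw [Finset.sum_range_succ, ih]
      have := Dker_tele hs1 hs0 N
      field_simp
      linarith
  have htend : Tendsto (fun N => ∑ k ∈ Finset.range N, gker s k) atTop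
      (nhds ((Dker s 0 - L) / (2 * s))) := by
    simp only [hpartial]
    exact ((hDtend.const_sub (Dker s 0)).div_const (2 * s))
  have hHS : HasSum (gker s) ((Dker s 0 - L) / (2 * s)) :=
    (hasSum_iff_tendsto_nat_of_nonneg (fun n => (gker_pos hs1 hs0 n).le) _).mpr htend
  have hLzero : L = 0 := by
    by_contra hne
    have hLpos : 0 < L := lt_of_le_of_ne hL0 (Ne.symm hne)
    have hcomp : Summable (fun n : ℕ => L / (1 + s) * (1 / ((n : ℝ) + 1))) := by
      refine Summable.of_nonneg_of_le (fun n => by positivity) (fun n => ?_) hHS.summable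
      ·
        have hn0 : (0:ℝ) ≤ (n : ℝ) := n.cast_nonneg
        have h2 : (0:ℝ) < (n : ℝ) + 1 + s := by linarith
        have h3 : (n : ℝ) + 1 + s ≤ (1 + s) * ((n : ℝ) + 1) := by nlinarith
        calc L / (1 + s) * (1 / ((n : ℝ) + 1)) = L / ((1 + s) * ((n:ℝ) + 1)) := by
              rw [div_mul_div_comm, mul_one]
          _ ≤ L / ((n : ℝ) + 1 + s) := by
              apply div_le_div_of_nonneg_left hL0 h2 h3
          _ ≤ Dker s n / ((n : ℝ) + 1 + s) := by gcongr; exact hLle n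
          _ = gker s n := (gker_eq hs1 hs0 n).symm
    have hc0 : L / (1 + s) ≠ 0 := by positivity
    have hsum2 : Summable (fun n : ℕ => 1 / ((n : ℝ) + 1)) :=
      (summable_mul_left_iff hc0).mp hcomp
    have : Summable (fun n : ℕ => 1 / ((n : ℕ) : ℝ)) := by
      refine (summable_nat_add_iff 1).mp ?_
      convert hsum2 using 2 with n
      · rfl
      · push_cast; ring
    exact Real.not_summable_one_div_natCast this
  rw [hLzero, sub_zero] at hHS
  exact hHS

lemma fker_symm (s : ℝ) (n : ℤ) : fker s (-n) = fker s n := by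
  have hpow : (-1 : ℝ) ^ (-n) = (-1 : ℝ) ^ n := by
    rw [zpow_neg, ← inv_zpow, inv_neg, inv_one]
  rw [fker, fker, hpow]
  push_cast
  ring_nf

lemma fker_succ {s : ℝ} (hs1 : s < 1) (hs0 : 0 < s) (n : ℕ) :
    fker s ((n : ℤ) + 1) = -(Real.Gamma (2 * s + 1) * Real.sin (π * s) / π) * gker s n := by
  have hn0 : (0:ℝ) ≤ (n : ℝ) := n.cast_nonneg
  have hsinpos : 0 < Real.sin (π * s) := by
    apply Real.sin_pos_of_pos_of_lt_pi
    · positivity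
    · nlinarith [Real.pi_pos]
  have h1 : (0:ℝ) < (n : ℝ) + 1 - s := by linarith
  have hG1 : (0:ℝ) < Real.Gamma ((n : ℝ) + 1 - s) := Real.Gamma_pos_of_pos h1
  have h2 : (0:ℝ) < (n : ℝ) + 2 + s := by linarith
  have hG2 : (0:ℝ) < Real.Gamma ((n : ℝ) + 2 + s) := Real.Gamma_pos_of_pos h2
  have hsin : Real.sin (π * (s - (n : ℝ))) = (-1 : ℝ) ^ n * Real.sin (π * s) := by
    rw [show π * (s - (n:ℝ)) = -((n : ℝ) * π - π * s) by ring, Real.sin_neg,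
      Real.sin_nat_mul_pi_sub, neg_neg]
  have hrefl := Real.Gamma_mul_Gamma_one_sub (s - (n : ℝ))
  rw [show (1 : ℝ) - (s - (n:ℝ)) = (n : ℝ) + 1 - s by ring, hsin] at hrefl
  have hpown : ((-1 : ℝ) ^ n) * ((-1 : ℝ) ^ n) = 1 := by
    rw [← pow_add]
    exact Even.neg_one_pow ⟨n, by ring⟩
  have hkey : Real.Gamma (s - (n : ℝ)) * Real.Gamma ((n : ℝ) + 1 - s)
      * ((-1 : ℝ) ^ n * Real.sin (π * s)) = π := by
    rw [hrefl]
    field_simp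
  have hGsn : Real.Gamma (s - (n : ℝ)) ≠ 0 := by
    intro h
    rw [h, zero_mul, zero_mul] at hkey
    exact Real.pi_ne_zero hkey.symm
  have hcast : (((n : ℤ) + 1 : ℤ) : ℝ) = (n : ℝ) + 1 := by push_cast; ring
  have hzpow : (-1 : ℝ) ^ ((n : ℤ) + 1) = (-1 : ℝ) ^ n * (-1) := by
    rw [zpow_add₀ (by norm_num : (-1:ℝ) ≠ 0), zpow_natCast, zpow_one]
  rw [fker, hcast, hzpow, gker]
  rw [show (1 : ℝ) + s + ((n:ℝ) + 1) = (n : ℝ) + 2 + s by ring,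
    show (1 : ℝ) + s - ((n:ℝ) + 1) = s - (n : ℝ) by ring]
  have hpi := Real.pi_ne_zero
  field_simp
  rw [mul_comm s π]
  linear_combination ((-1:ℝ)^n) * hkey
    - Real.Gamma (s-(n:ℝ)) * Real.Gamma ((n:ℝ)+1-s) * Real.sin (π*s) * hpown



/-- The series `Σ_{n∈ℤ} (-1)^n Γ(2s+1)/(Γ(1+s+n)Γ(1+s-n))` converges absolutely with sum `0`;
equivalently `Σ_{n∈ℤ} K^s_h(n) = 0` for every `h > 0`. -/
theorem kernel_sum_zero (s : ℝ) (hs0 : 0 < s) (hs1 : s < 1) :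
    (Summable fun n : ℤ =>
      |(-1 : ℝ) ^ n * Real.Gamma (2 * s + 1) /
        (Real.Gamma (1 + s + (n : ℝ)) * Real.Gamma (1 + s - (n : ℝ)))|) ∧
    (∑' n : ℤ, (-1 : ℝ) ^ n * Real.Gamma (2 * s + 1) /
        (Real.Gamma (1 + s + (n : ℝ)) * Real.Gamma (1 + s - (n : ℝ)))) = 0 ∧
    ∀ h : ℝ, 0 < h → (∑' n : ℤ, Ksh s h n) = 0 := by
  have hπ := Real.pi_ne_zero
  have hsin : 0 < Real.sin (π * s) := by
    apply Real.sin_pos_of_pos_of_lt_pi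
    · positivity
    · nlinarith [Real.pi_pos]
  set c : ℝ := Real.Gamma (2 * s + 1) * Real.sin (π * s) / π with hc
  have hc0 : 0 ≤ c := by
    have : 0 < Real.Gamma (2 * s + 1) := Real.Gamma_pos_of_pos (by linarith)
    have := Real.pi_pos
    positivity
  have hS := hasSum_gker hs1 hs0
  have habs_succ : ∀ n : ℕ, |fker s ((n : ℤ) + 1)| = c * gker s n := by
    intro n
    rw [fker_succ hs1 hs0 n, abs_mul, abs_neg, abs_of_nonneg hc0,
      abs_of_nonneg (gker_pos hs1 hs0 n).le]
  have hshift : ∀ n : ℕ, ((n + 1 : ℕ) : ℤ) = (n : ℤ) + 1 := by intro n; push_cast; ring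
  have hsum_abs_nat : Summable (fun n : ℕ => |fker s (n : ℤ)|) := by
    refine (summable_nat_add_iff 1).mp ?_
    have heq : (fun n : ℕ => |fker s ((n + 1 : ℕ) : ℤ)|) = fun n : ℕ => c * gker s n := by
      funext n; rw [hshift n, habs_succ n]
    rw [heq]
    exact hS.summable.mul_left c
  have hsum_abs_neg : Summable (fun n : ℕ => |fker s (-((n : ℤ) + 1))|) := by
    have heq : (fun n : ℕ => |fker s (-((n : ℤ) + 1))|) = fun n : ℕ => c * gker s n := by
      funext n; rw [fker_symm, habs_succ n]
    rw [heq]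
    exact hS.summable.mul_left c
  have hsum_abs : Summable (fun n : ℤ => |fker s n|) :=
    Summable.of_nat_of_neg_add_one hsum_abs_nat hsum_abs_neg
  have hsum_nat : Summable (fun n : ℕ => fker s (n : ℤ)) := hsum_abs_nat.of_abs
  have hsum_neg : Summable (fun n : ℕ => fker s (-((n : ℤ) + 1))) := hsum_abs_neg.of_abs
  -- value of the positive-shifted sum
  have hHSsucc : HasSum (fun n : ℕ => fker s ((n : ℤ) + 1)) (-c * (Dker s 0 / (2 * s))) := by
    have h := hS.mul_left (-c)
    have heq : (fun n : ℕ => fker s ((n : ℤ) + 1)) = fun n : ℕ => -c * gker s n := by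
      funext n; rw [fker_succ hs1 hs0 n, hc]
    rw [heq]
    exact h
  have htpos : (∑' n : ℕ, fker s (n : ℤ)) = fker s 0 + -c * (Dker s 0 / (2 * s)) := by
    rw [Summable.tsum_eq_zero_add hsum_nat,
      show (fun n : ℕ => fker s ((n + 1 : ℕ) : ℤ)) = fun n : ℕ => fker s ((n : ℤ) + 1) by
        funext n; rw [hshift n],
      hHSsucc.tsum_eq, Nat.cast_zero]
  have htneg : (∑' n : ℕ, fker s (-((n : ℤ) + 1))) = -c * (Dker s 0 / (2 * s)) := by
    rw [show (fun n : ℕ => fker s (-((n : ℤ) + 1))) = fun n : ℕ => fker s ((n : ℤ) + 1) by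
      funext n; rw [fker_symm]]
    exact hHSsucc.tsum_eq
  -- the total sum is zero
  have htot : (∑' n : ℤ, fker s n) = 0 := by
    rw [tsum_of_nat_of_neg_add_one hsum_nat hsum_neg, htpos, htneg]
    have hf0 : fker s 0 = Real.Gamma (2 * s + 1) / (Real.Gamma (1 + s) * Real.Gamma (1 + s)) := by
      rw [fker]; norm_num
    have hD0 : Dker s 0 = Real.Gamma (1 - s) / Real.Gamma (1 + s) := by
      rw [Dker]; norm_num
    have hGspos : 0 < Real.Gamma s := Real.Gamma_pos_of_pos hs0
    have hG1s : 0 < Real.Gamma (1 - s) := Real.Gamma_pos_of_pos (by linarith)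
    have hG1p : 0 < Real.Gamma (1 + s) := Real.Gamma_pos_of_pos (by linarith)
    have hGadd : Real.Gamma (1 + s) = s * Real.Gamma s := by
      rw [add_comm, Real.Gamma_add_one hs0.ne']
    have hkey : Real.Gamma s * Real.Gamma (1 - s) * Real.sin (π * s) = π := by
      rw [Real.Gamma_mul_Gamma_one_sub, div_mul_cancel₀ _ hsin.ne']
    rw [hf0, hD0, hc, hGadd]
    field_simp
    rw [mul_comm s π]
    linear_combination (-2 * Real.Gamma (2 * s + 1)) * hkey
  refine ⟨hsum_abs, htot, ?_⟩
  intro h hh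
  have hK : ∀ n : ℤ, Ksh s h n = fker s n / h ^ (2 * s) := by
    intro n
    rw [Ksh, fker, div_div]
  calc (∑' n : ℤ, Ksh s h n) = ∑' n : ℤ, fker s n / h ^ (2 * s) := tsum_congr hK
    _ = (∑' n : ℤ, fker s n) / h ^ (2 * s) := by rw [tsum_div_const]
    _ = 0 := by rw [htot, zero_div]
end

section
/- Let 0 < s < 1, h > 0, and let u : ℤ_h → ℝ satisfy Σ_{m∈ℤ} |u(mh)|/(1+|m|^{1+2s}) < ∞. Then for every j ∈ ℤ the two series Σ_{m∈ℤ, m≠j} (u(jh) − u(mh)) R^s_h(j−m) and Σ_{n∈ℤ} K^s_h(j−n) u(nh) converge absolutely and are equal: Σ_{m≠j} (u(jh)−u(mh)) R^s_h(j−m) = Σ_{n∈ℤ} K^s_h(j−n) u(nh). -/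
set_option linter.unusedSectionVars false
set_option linter.unusedVariables false

open Real Filter Topology

noncomputable def dflA (s : ℝ) (k : ℕ) : ℝ := Real.Gamma (k - s) / Real.Gamma (k + s)

noncomputable def dflG (s : ℝ) (k : ℕ) : ℝ := Real.Gamma (k - s) / Real.Gamma (k + 1 + s)

noncomputable def dflC (s : ℝ) : ℝ :=
  (4 : ℝ) ^ s * Real.Gamma (1 / 2 + s) * s / (Real.sqrt Real.pi * Real.Gamma (1 - s))

section aux

variable {s : ℝ} (hs0 : 0 < s) (hs1 : s < 1)

lemma dfl_ks_pos (hs1 : s < 1) {k : ℕ} (hk : 1 ≤ k) : (0:ℝ) < (k:ℝ) - s := by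
  have : (1:ℝ) ≤ (k:ℝ) := by exact_mod_cast hk
  linarith

lemma dfl_ksp_pos (hs0 : 0 < s) (k : ℕ) : (0:ℝ) < (k:ℝ) + s := by positivity

include hs0 hs1

lemma dflA_pos {k : ℕ} (hk : 1 ≤ k) : 0 < dflA s k :=
  div_pos (Real.Gamma_pos_of_pos (dfl_ks_pos hs1 hk))
    (Real.Gamma_pos_of_pos (dfl_ksp_pos hs0 k))

lemma dflG_pos {k : ℕ} (hk : 1 ≤ k) : 0 < dflG s k := by
  have h1 : (0:ℝ) < (k:ℝ) + 1 + s := by positivity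
  exact div_pos (Real.Gamma_pos_of_pos (dfl_ks_pos hs1 hk)) (Real.Gamma_pos_of_pos h1)

lemma dflA_succ {k : ℕ} (hk : 1 ≤ k) :
    dflA s (k+1) = dflA s k * (((k:ℝ) - s) / ((k:ℝ) + s)) := by
  have h1 : (((k+1:ℕ)):ℝ) - s = ((k:ℝ) - s) + 1 := by push_cast; ring
  have h2 : (((k+1:ℕ)):ℝ) + s = ((k:ℝ) + s) + 1 := by push_cast; ring
  have hk1 : ((k:ℝ) - s) ≠ 0 := (dfl_ks_pos hs1 hk).ne'
  have hk2 : ((k:ℝ) + s) ≠ 0 := (dfl_ksp_pos hs0 k).ne'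
  unfold dflA
  rw [h1, h2, Real.Gamma_add_one hk1, Real.Gamma_add_one hk2]
  rw [mul_div_mul_comm]
  ring

lemma dflG_eq {k : ℕ} (hk : 1 ≤ k) : dflG s k = dflA s k / ((k:ℝ) + s) := by
  have hk2 : ((k:ℝ) + s) ≠ 0 := (dfl_ksp_pos hs0 k).ne'
  have h3 : (k:ℝ) + 1 + s = ((k:ℝ) + s) + 1 := by ring
  unfold dflG dflA
  rw [h3, Real.Gamma_add_one hk2, div_div, mul_comm]

lemma dflA_sub {k : ℕ} (hk : 1 ≤ k) :
    dflA s k - dflA s (k+1) = 2 * s * dflG s k := by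
  rw [dflA_succ hs0 hs1 hk, dflG_eq hs0 hs1 hk]
  have hk2 : ((k:ℝ) + s) ≠ 0 := (dfl_ksp_pos hs0 k).ne'
  field_simp
  ring


lemma dfl_factor {x : ℝ} (hx : 1 ≤ x) :
    ((x+1)/x) ^ (2*s) * (x - s) ≤ x + s := by
  have hx0 : (0:ℝ) < x := lt_of_lt_of_le one_pos hx
  have ht0 : (0:ℝ) < 1/x := by positivity
  have ht1 : 1/x ≤ 1 := by rw [div_le_one hx0]; exact hx
  have htx : (1/x) * x = 1 := by field_simp
  have hxs : (0:ℝ) ≤ x - s := by nlinarith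
  have hrw : (x+1)/x = 1 + 1/x := by field_simp
  rw [hrw]
  rcases le_or_gt (2*s) 1 with h2s | h2s
  · have hb := rpow_one_add_le_one_add_mul_self (s := 1/x) (by linarith) (p := 2*s)
      (by linarith) h2s
    have h := mul_le_mul_of_nonneg_right hb hxs
    have expand2 : (1 + 2*s*(1/x)) * (x - s) = x + s - 2*s^2/x := by
      field_simp
      ring
    rw [expand2] at h
    have h1 : 0 ≤ 2*s^2/x := by positivity
    linarith
  · set q : ℝ := 2*s - 1 with hq
    have hq0 : 0 < q := by simp [hq]; linarith
    have hq1 : q < 1 := by simp [hq]; linarith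
    have hb : (1 + 1/x) ^ q ≤ 1 + q * (1/x) :=
      rpow_one_add_le_one_add_mul_self (by linarith) hq0.le hq1.le
    have hsplit : (1 + 1/x) ^ (2*s) = (1 + 1/x) * (1 + 1/x) ^ q := by
      rw [show (2*s) = 1 + q by ring, Real.rpow_add (by positivity), Real.rpow_one]
    rw [hsplit]
    have h1x : (0:ℝ) < 1 + 1/x := by positivity
    have hbb : (1 + 1/x) * (1 + 1/x) ^ q ≤ (1 + 1/x) * (1 + q * (1/x)) := by
      exact mul_le_mul_of_nonneg_left hb h1x.le
    have key : (1 + 1/x) * (1 + q * (1/x)) * (x - s) ≤ x + s := by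
      have hqs : q < 2*s^2 := by nlinarith [sq_nonneg (2*s - 1)]
      have expand : (1 + 1/x) * (1 + q * (1/x)) * (x - s)
          = x + s - (2*s^2 - q)/x - q*s/x^2 := by
        field_simp
        ring
      rw [expand]
      have h1 : 0 ≤ (2*s^2 - q)/x := div_nonneg (by linarith) hx0.le
      have h2 : 0 ≤ q*s/x^2 := by positivity
      linarith
    calc (1 + 1/x) * (1 + 1/x) ^ q * (x - s)
        ≤ (1 + 1/x) * (1 + q * (1/x)) * (x - s) := mul_le_mul_of_nonneg_right hbb hxs
      _ ≤ x + s := key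

end aux

section decay
variable {s : ℝ} (hs0 : 0 < s) (hs1 : s < 1)
include hs0 hs1

lemma dflA_le {k : ℕ} (hk : 1 ≤ k) :
    (k:ℝ) ^ (2*s) * dflA s k ≤ dflA s 1 := by
  induction k, hk using Nat.le_induction with
  | base => simp [Real.one_rpow]
  | succ n hn ih =>
    have hn0 : (0:ℝ) < n := by exact_mod_cast hn
    have hn1 : (1:ℝ) ≤ n := by exact_mod_cast hn
    have hf := dfl_factor hs0 hs1 hn1
    have hA := dflA_pos hs0 hs1 hn
    have hsucc := dflA_succ hs0 hs1 hn
    have hcast : (((n+1:ℕ)):ℝ) = (n:ℝ) + 1 := by push_cast; ring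
    rw [hsucc, hcast]
    have hsplit : ((n:ℝ)+1) ^ (2*s) = (((n:ℝ)+1)/(n:ℝ)) ^ (2*s) * (n:ℝ) ^ (2*s) := by
      rw [← Real.mul_rpow (by positivity) (by positivity), div_mul_cancel₀]
      exact hn0.ne'
    rw [hsplit]
    have hns : (0:ℝ) < (n:ℝ) + s := by positivity
    have hkey : (((n:ℝ)+1)/(n:ℝ)) ^ (2*s) * (((n:ℝ) - s) / ((n:ℝ) + s)) ≤ 1 := by
      rw [← mul_div_assoc, div_le_one hns]
      exact hf
    calc (((n:ℝ)+1)/(n:ℝ)) ^ (2*s) * (n:ℝ) ^ (2*s) * (dflA s n * (((n:ℝ) - s) / ((n:ℝ) + s)))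
        = ((n:ℝ) ^ (2*s) * dflA s n) * ((((n:ℝ)+1)/(n:ℝ)) ^ (2*s) * (((n:ℝ) - s) / ((n:ℝ) + s))) := by
          ring
      _ ≤ ((n:ℝ) ^ (2*s) * dflA s n) * 1 := by
          apply mul_le_mul_of_nonneg_left hkey
          positivity
      _ = (n:ℝ) ^ (2*s) * dflA s n := by ring
      _ ≤ dflA s 1 := ih

lemma dflA_le' {k : ℕ} (hk : 1 ≤ k) :
    dflA s k ≤ dflA s 1 * (k:ℝ) ^ (-(2*s)) := by
  have hk0 : (0:ℝ) < k := by exact_mod_cast hk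
  have hrp : (0:ℝ) < (k:ℝ) ^ (2*s) := Real.rpow_pos_of_pos hk0 _
  have := dflA_le hs0 hs1 hk
  rw [Real.rpow_neg hk0.le, ← div_eq_mul_inv, le_div_iff₀ hrp]
  linarith [this]

lemma dflG_le {k : ℕ} (hk : 1 ≤ k) :
    dflG s k ≤ dflA s 1 * (k:ℝ) ^ (-(1+2*s)) := by
  have hk0 : (0:ℝ) < k := by exact_mod_cast hk
  have hns : (0:ℝ) < (k:ℝ) + s := by positivity
  have hA := dflA_pos hs0 hs1 hk
  rw [dflG_eq hs0 hs1 hk]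
  have h1 : dflA s k / ((k:ℝ) + s) ≤ dflA s k / (k:ℝ) :=
    div_le_div_of_nonneg_left hA.le hk0 (by linarith)
  have h2 : dflA s k / (k:ℝ) ≤ (dflA s 1 * (k:ℝ) ^ (-(2*s))) / (k:ℝ) := by
    gcongr
    exact dflA_le' hs0 hs1 hk
  have h3 : (dflA s 1 * (k:ℝ) ^ (-(2*s))) / (k:ℝ) = dflA s 1 * (k:ℝ) ^ (-(1+2*s)) := by
    rw [show -(1+2*s) = -(2*s) + (-1) by ring, Real.rpow_add hk0, Real.rpow_neg_one]
    field_simp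
  linarith [h1, h2, h3.symm.le]

lemma dflA_tendsto : Tendsto (fun n : ℕ => dflA s (n+1)) atTop (𝓝 0) := by
  have hg : Tendsto (fun n : ℕ => dflA s 1 * (((n+1:ℕ)):ℝ) ^ (-(2*s))) atTop (𝓝 (dflA s 1 * 0)) := by
    apply Tendsto.const_mul
    have h1 : Tendsto (fun n : ℕ => (((n+1:ℕ)):ℝ)) atTop atTop := by
      apply tendsto_natCast_atTop_atTop.comp
      exact tendsto_add_atTop_nat 1
    exact (tendsto_rpow_neg_atTop (by linarith)).comp h1
  rw [mul_zero] at hg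
  apply squeeze_zero (fun n => (dflA_pos hs0 hs1 (Nat.le_add_left 1 n)).le)
    (fun n => ?_) hg
  exact dflA_le' hs0 hs1 (Nat.le_add_left 1 n)

end decay

section sums
variable {s : ℝ} (hs0 : 0 < s) (hs1 : s < 1)
include hs0 hs1

lemma dfl_tel (n : ℕ) :
    ∑ i ∈ Finset.range n, 2 * s * dflG s (i+1) = dflA s 1 - dflA s (n+1) := by
  have : ∀ i ∈ Finset.range n, 2 * s * dflG s (i+1)
      = dflA s (i+1) - dflA s (i+1+1) := by
    intro i _
    rw [dflA_sub hs0 hs1 (Nat.le_add_left 1 i)]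
  rw [Finset.sum_congr rfl this]
  exact Finset.sum_range_sub' (fun i => dflA s (i+1)) n

lemma dflG_hasSum : HasSum (fun n : ℕ => dflG s (n+1)) (dflA s 1 / (2*s)) := by
  have hnn : ∀ n : ℕ, 0 ≤ 2 * s * dflG s (n+1) := by
    intro n
    have := dflG_pos hs0 hs1 (Nat.le_add_left 1 n)
    positivity
  have hbd : ∀ n, ∑ i ∈ Finset.range n, 2 * s * dflG s (i+1) ≤ dflA s 1 := by
    intro n
    rw [dfl_tel hs0 hs1 n]
    have := dflA_pos hs0 hs1 (Nat.le_add_left 1 n)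
    linarith
  have hsum : Summable (fun n : ℕ => 2 * s * dflG s (n+1)) :=
    summable_of_sum_range_le hnn hbd
  have hlim1 := hsum.hasSum.tendsto_sum_nat
  have hlim2 : Tendsto (fun n => ∑ i ∈ Finset.range n, 2 * s * dflG s (i+1)) atTop
      (𝓝 (dflA s 1)) := by
    have : Tendsto (fun n : ℕ => dflA s 1 - dflA s (n+1)) atTop (𝓝 (dflA s 1 - 0)) :=
      tendsto_const_nhds.sub (dflA_tendsto hs0 hs1)
    rw [sub_zero] at this
    exact this.congr (fun n => (dfl_tel hs0 hs1 n).symm)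
  have hval : ∑' n : ℕ, 2 * s * dflG s (n+1) = dflA s 1 :=
    tendsto_nhds_unique hlim1 hlim2
  have h2s : (2*s) ≠ 0 := by positivity
  have := hsum.hasSum
  rw [hval] at this
  have h2 := this.div_const (2*s)
  have : (fun n : ℕ => 2 * s * dflG s (n+1) / (2*s)) = (fun n : ℕ => dflG s (n+1)) := by
    funext n
    field_simp
  rwa [this] at h2

end sums

section kernels
variable {s h : ℝ} (hs0 : 0 < s) (hs1 : s < 1) (hh : 0 < h)

lemma dfl_four_two : (4:ℝ) ^ s * (2:ℝ) ^ (1 - 2*s) = 2 := by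
  have h4 : (4:ℝ) ^ s = (2:ℝ) ^ (2*s) := by
    rw [show (4:ℝ) = (2:ℝ) ^ (2:ℝ) by
        rw [show (2:ℝ) = ((2:ℕ):ℝ) by norm_num, Real.rpow_natCast]; norm_num,
      ← Real.rpow_mul (by norm_num)]
  rw [h4, ← Real.rpow_add (by norm_num)]
  norm_num

include hs0 hs1

lemma dfl_sin_pos : 0 < Real.sin (Real.pi * s) := by
  apply Real.sin_pos_of_pos_of_lt_pi
  · positivity
  · nlinarith [Real.pi_pos]

lemma dflC_pos : 0 < dflC s := by
  unfold dflC
  have h1 : 0 < Real.Gamma (1/2 + s) := Real.Gamma_pos_of_pos (by linarith)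
  have h2 : 0 < Real.Gamma (1 - s) := Real.Gamma_pos_of_pos (by linarith)
  have h3 : (0:ℝ) < Real.sqrt Real.pi := Real.sqrt_pos.mpr Real.pi_pos
  positivity

lemma dfl_const : Real.Gamma (2*s+1) * Real.sin (Real.pi * s) / Real.pi = dflC s := by
  have hπ : (0:ℝ) < Real.pi := Real.pi_pos
  have hsq : (0:ℝ) < Real.sqrt Real.pi := Real.sqrt_pos.mpr hπ
  have hGs : 0 < Real.Gamma s := Real.Gamma_pos_of_pos hs0
  have hG1s : 0 < Real.Gamma (1 - s) := Real.Gamma_pos_of_pos (by linarith)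
  have hG2s : 0 < Real.Gamma (2*s) := Real.Gamma_pos_of_pos (by linarith)
  have hsin : Real.sin (Real.pi * s) * (Real.Gamma s * Real.Gamma (1-s)) = Real.pi := by
    rw [Real.Gamma_mul_Gamma_one_sub s]
    field_simp [(dfl_sin_pos hs0 hs1).ne']
  have hdup := Real.Gamma_mul_Gamma_add_half s
  have hG21 : Real.Gamma (2*s+1) = 2*s*Real.Gamma (2*s) :=
    Real.Gamma_add_one (by positivity)
  have h42 := dfl_four_two (s := s)
  have hhalf : Real.Gamma (1/2 + s) = Real.Gamma (2*s) * (2:ℝ)^(1-2*s) * Real.sqrt Real.pi / Real.Gamma s := by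
    rw [add_comm, eq_div_iff hGs.ne']
    linarith [hdup]
  unfold dflC
  rw [hG21, hhalf]
  field_simp
  have hsin' : Real.sin (s * Real.pi) * (Real.Gamma s * Real.Gamma (1-s)) = Real.pi := by
    rw [mul_comm s]; exact hsin
  linear_combination 2 * hsin' - Real.pi * h42

end kernels

section kernels2
variable {s h : ℝ} (hs0 : 0 < s) (hs1 : s < 1) (hh : 0 < h)

lemma Rsh_neg' (m : ℤ) : Rsh s h (-m) = Rsh s h m := by
  unfold Rsh
  rcases eq_or_ne m 0 with rfl | hm
  · norm_num
  · rw [if_neg (neg_ne_zero.mpr hm), if_neg hm, abs_neg]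

lemma Rsh_eq (m : ℤ) (hm : m ≠ 0) :
    Rsh s h m = dflC s / h ^ (2*s) * dflG s m.natAbs := by
  unfold Rsh dflC dflG
  rw [if_neg hm]
  have hcast : ((|m| : ℤ) : ℝ) = ((m.natAbs : ℕ) : ℝ) := by
    rw [Nat.cast_natAbs, Int.cast_abs]
  rw [hcast]
  ring

lemma Ksh_neg' (n : ℤ) : Ksh s h (-n) = Ksh s h n := by
  unfold Ksh
  have h1 : ((-n : ℤ) : ℝ) = -(n:ℝ) := by push_cast; ring
  rw [h1, zpow_neg]
  have h2 : ((-1:ℝ) ^ n)⁻¹ = (-1:ℝ) ^ n := by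
    have : ((-1:ℝ) ^ n) * ((-1:ℝ) ^ n) = 1 := by
      rw [← zpow_add₀ (by norm_num : (-1:ℝ) ≠ 0), show n + n = 2*n by ring,
        zpow_mul]
      norm_num
    exact inv_eq_of_mul_eq_one_left this
  rw [h2, show 1 + s + -(n:ℝ) = 1 + s - (n:ℝ) by ring, show 1 + s - -(n:ℝ) = 1 + s + (n:ℝ) by ring]
  ring_nf

include hs0 hs1 hh

lemma Rsh_nonneg (m : ℤ) : 0 ≤ Rsh s h m := by
  rcases eq_or_ne m 0 with rfl | hm
  · simp [Rsh]
  · rw [Rsh_eq m hm]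
    have h1 : 0 < dflG s m.natAbs :=
      dflG_pos hs0 hs1 (by omega)
    have h2 : 0 < dflC s := dflC_pos hs0 hs1
    have h3 : (0:ℝ) < h ^ (2*s) := Real.rpow_pos_of_pos hh _
    positivity

lemma Ksh_nat {k : ℕ} (hk : 1 ≤ k) :
    Ksh s h (k : ℤ) = -(dflC s / h ^ (2*s) * dflG s k) := by
  have hπ : (0:ℝ) < Real.pi := Real.pi_pos
  have hks : (0:ℝ) < (k:ℝ) - s := dfl_ks_pos hs1 hk
  have hG1 : 0 < Real.Gamma ((k:ℝ) - s) := Real.Gamma_pos_of_pos hks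
  have hG2 : 0 < Real.Gamma ((k:ℝ) + 1 + s) := Real.Gamma_pos_of_pos (by positivity)
  have hsin : Real.sin (Real.pi * ((k:ℝ) - s)) = -((-1:ℝ)^k * Real.sin (Real.pi * s)) := by
    rw [show Real.pi * ((k:ℝ) - s) = (k:ℝ) * Real.pi - Real.pi * s by ring]
    exact Real.sin_nat_mul_pi_sub (Real.pi * s) k
  have hsin0 : Real.sin (Real.pi * ((k:ℝ) - s)) ≠ 0 := by
    rw [hsin]
    have hp := dfl_sin_pos hs0 hs1
    rcases Nat.even_or_odd k with he | ho
    · rw [he.neg_one_pow]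
      simpa using hp.ne'
    · rw [ho.neg_one_pow]
      simpa using hp.ne'
  have hrefl := Real.Gamma_mul_Gamma_one_sub ((k:ℝ) - s)
  have h1subk : 1 - ((k:ℝ) - s) = 1 + s - (k:ℝ) := by ring
  rw [h1subk] at hrefl
  have hGref : Real.Gamma (1 + s - (k:ℝ))
      = Real.pi / (Real.sin (Real.pi * ((k:ℝ) - s)) * Real.Gamma ((k:ℝ) - s)) := by
    rw [eq_div_iff (by exact mul_ne_zero hsin0 hG1.ne')]
    rw [eq_div_iff hsin0] at hrefl
    linear_combination hrefl
  unfold Ksh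
  have hcast : (((k:ℤ)):ℝ) = (k:ℝ) := by push_cast; ring
  rw [hcast, zpow_natCast, hGref,
    show 1 + s + (k:ℝ) = (k:ℝ) + 1 + s by ring]
  unfold dflG
  have hhs : (0:ℝ) < h ^ (2*s) := Real.rpow_pos_of_pos hh _
  have hconst := dfl_const hs0 hs1
  have hC : dflC s = Real.Gamma (2*s+1) * Real.sin (Real.pi * s) / Real.pi := hconst.symm
  rw [hC, hsin]
  have he : ((-1:ℝ)^k) * ((-1:ℝ)^k) = 1 := by
    rw [← pow_add, ← two_mul, pow_mul]
    norm_num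
  field_simp
  ring_nf
  rw [show ((-1:ℝ)) ^ (k*2) = 1 from Even.neg_one_pow ⟨k, by ring⟩, mul_one]

end kernels2

section kernels3
variable {s h : ℝ} (hs0 : 0 < s) (hs1 : s < 1) (hh : 0 < h)
include hs0 hs1 hh

lemma Ksh_eq_neg_Rsh_s6 (n : ℤ) (hn : n ≠ 0) : Ksh s h n = - Rsh s h n := by
  have hk : 1 ≤ n.natAbs := by omega
  have hR : Rsh s h n = dflC s / h ^ (2*s) * dflG s n.natAbs := Rsh_eq n hn
  have hnat : Ksh s h (n.natAbs : ℤ) = -(dflC s / h ^ (2*s) * dflG s n.natAbs) :=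
    Ksh_nat hs0 hs1 hh hk
  rcases Int.natAbs_eq n with he | he
  · rw [← he] at hnat
    rw [hnat, hR]
  · have h2 : Ksh s h n = Ksh s h (n.natAbs : ℤ) := by
      conv_lhs => rw [he]
      exact Ksh_neg' _
    rw [h2, hnat, hR]

lemma Ksh_zero_eq :
    Ksh s h 0 = Real.Gamma (2*s+1) / (Real.Gamma (1+s) * Real.Gamma (1+s) * h ^ (2*s)) := by
  unfold Ksh
  norm_num

lemma dfl_sum_const :
    dflC s * dflA s 1 / s
      = Real.Gamma (2*s+1) / (Real.Gamma (1+s) * Real.Gamma (1+s)) := by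
  have hπ : (0:ℝ) < Real.pi := Real.pi_pos
  have hsq : (0:ℝ) < Real.sqrt Real.pi := Real.sqrt_pos.mpr hπ
  have hGs : 0 < Real.Gamma s := Real.Gamma_pos_of_pos hs0
  have hG1s : 0 < Real.Gamma (1 - s) := Real.Gamma_pos_of_pos (by linarith)
  have hG1p : 0 < Real.Gamma (1 + s) := Real.Gamma_pos_of_pos (by linarith)
  have hG2s : 0 < Real.Gamma (2*s) := Real.Gamma_pos_of_pos (by linarith)
  have hGh : 0 < Real.Gamma (1/2 + s) := Real.Gamma_pos_of_pos (by linarith)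
  have hdup := Real.Gamma_mul_Gamma_add_half s
  have hG21 : Real.Gamma (2*s+1) = 2*s*Real.Gamma (2*s) :=
    Real.Gamma_add_one (by positivity)
  have h42 := dfl_four_two (s := s)
  have h4pos : (0:ℝ) < (4:ℝ) ^ s := Real.rpow_pos_of_pos (by norm_num) _
  have hkey : (4:ℝ)^s * Real.Gamma (1/2+s) * Real.Gamma (1+s)
      = Real.sqrt Real.pi * Real.Gamma (2*s+1) := by
    rw [show (1:ℝ)+s = s+1 by ring, Real.Gamma_add_one hs0.ne', hG21,
      show (1:ℝ)/2+s = s+1/2 by ring]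
    linear_combination ((4:ℝ)^s * s) * hdup + (s * Real.Gamma (2*s) * Real.sqrt Real.pi) * h42
  have hA1 : dflA s 1 = Real.Gamma (1-s) / Real.Gamma (1+s) := by
    unfold dflA
    norm_num
  unfold dflC
  rw [hA1]
  set A := (4:ℝ)^s with hA
  set B := Real.Gamma (1/2+s) with hB
  set C := Real.sqrt Real.pi with hCq
  set D := Real.Gamma (1-s) with hD
  set E := Real.Gamma (1+s) with hE
  set F := Real.Gamma (2*s+1) with hF
  rw [div_eq_div_iff (by positivity) (by positivity)]
  field_simp
  linear_combination hkey

lemma Rsh_hasSum : HasSum (fun m : ℤ => Rsh s h m) (Ksh s h 0) := by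
  have hhs : (0:ℝ) < h ^ (2*s) := Real.rpow_pos_of_pos hh _
  have key : ∀ n : ℕ, Rsh s h ((n:ℤ) + 1) = dflC s / h ^ (2*s) * dflG s (n+1) := by
    intro n
    have hnn : ((n:ℤ)+1).natAbs = n+1 := by omega
    rw [Rsh_eq _ (by omega : ((n:ℤ)+1) ≠ 0), hnn]
  have hplus : HasSum (fun n : ℕ => Rsh s h ((n:ℤ) + 1))
      (dflC s / h ^ (2*s) * (dflA s 1 / (2*s))) := by
    rw [show (fun n : ℕ => Rsh s h ((n:ℤ) + 1))
        = (fun n : ℕ => dflC s / h ^ (2*s) * dflG s (n+1)) from funext key]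
    exact (dflG_hasSum hs0 hs1).mul_left _
  have hminus : HasSum (fun n : ℕ => Rsh s h (-((n:ℤ) + 1)))
      (dflC s / h ^ (2*s) * (dflA s 1 / (2*s))) := by
    rw [show (fun n : ℕ => Rsh s h (-((n:ℤ) + 1)))
        = (fun n : ℕ => Rsh s h ((n:ℤ) + 1)) from funext fun n => Rsh_neg' _]
    exact hplus
  have htot := hplus.of_add_one_of_neg_add_one hminus
  have hR0 : Rsh s h 0 = 0 := by simp [Rsh]
  rw [hR0] at htot
  have hval : dflC s / h ^ (2*s) * (dflA s 1 / (2*s)) + 0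
      + dflC s / h ^ (2*s) * (dflA s 1 / (2*s)) = Ksh s h 0 := by
    rw [Ksh_zero_eq hs0 hs1 hh]
    have := dfl_sum_const hs0 hs1 hh
    have hexp : dflC s / h ^ (2*s) * (dflA s 1 / (2*s)) + 0
        + dflC s / h ^ (2*s) * (dflA s 1 / (2*s)) = (dflC s * dflA s 1 / s) / h ^ (2*s) := by
      field_simp
      ring
    rw [hexp, this, div_div]
  rwa [hval] at htot

end kernels3

section final
variable {s h : ℝ} (hs0 : 0 < s) (hs1 : s < 1) (hh : 0 < h)
include hs0 hs1 hh

lemma Rsh_le (m : ℤ) (hm : m ≠ 0) :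
    Rsh s h m ≤ (dflC s / h ^ (2*s) * dflA s 1) * ((m.natAbs : ℝ)) ^ (-(1+2*s)) := by
  rw [Rsh_eq m hm]
  have hk : 1 ≤ m.natAbs := by omega
  have hG := dflG_le hs0 hs1 hk
  have hB : (0:ℝ) ≤ dflC s / h ^ (2*s) := by
    have h1 := dflC_pos hs0 hs1
    have h2 : (0:ℝ) < h ^ (2*s) := Real.rpow_pos_of_pos hh _
    positivity
  calc dflC s / h ^ (2*s) * dflG s m.natAbs
      ≤ dflC s / h ^ (2*s) * (dflA s 1 * ((m.natAbs:ℝ)) ^ (-(1+2*s))) :=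
        mul_le_mul_of_nonneg_left hG hB
    _ = (dflC s / h ^ (2*s) * dflA s 1) * ((m.natAbs : ℝ)) ^ (-(1+2*s)) := by ring

lemma dfl_bound (j m : ℤ) :
    Rsh s h (j - m) ≤ (dflC s / h ^ (2*s) * dflA s 1 * (1 + (1 + |(j:ℝ)|) ^ (1+2*s)))
      / (1 + ((|m| : ℤ) : ℝ) ^ (1 + 2*s)) := by
  set p : ℝ := 1 + 2*s with hp
  have hp0 : (0:ℝ) < p := by simp [hp]; linarith
  have hmabs : ((|m| : ℤ) : ℝ) = |(m:ℝ)| := by rw [Int.cast_abs]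
  have hden : (0:ℝ) < 1 + ((|m| : ℤ) : ℝ) ^ p := by
    have : (0:ℝ) ≤ ((|m| : ℤ) : ℝ) ^ p := by
      apply Real.rpow_nonneg
      rw [hmabs]
      exact abs_nonneg _
    linarith
  have hA1 := dflA_pos hs0 hs1 (le_refl 1)
  have hC := dflC_pos hs0 hs1
  have hhp : (0:ℝ) < h ^ (2*s) := Real.rpow_pos_of_pos hh _
  have hBpos : (0:ℝ) < dflC s / h ^ (2*s) * dflA s 1 := by positivity
  set B : ℝ := dflC s / h ^ (2*s) * dflA s 1 with hB
  have hjp : (0:ℝ) ≤ (1 + |(j:ℝ)|) ^ p := Real.rpow_nonneg (by positivity) _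
  rcases eq_or_ne m j with rfl | hmj
  · simp only [sub_self]
    have : Rsh s h 0 = 0 := by simp [Rsh]
    rw [this]
    positivity
  · rw [le_div_iff₀ hden]
    set n : ℕ := (j - m).natAbs with hn
    have hn1 : 1 ≤ n := by omega
    have hn0 : (0:ℝ) < (n:ℝ) := by exact_mod_cast hn1
    have hn1' : (1:ℝ) ≤ (n:ℝ) := by exact_mod_cast hn1
    have hRle := Rsh_le hs0 hs1 hh (j - m) (by omega)
    have hnp1 : (1:ℝ) ≤ (n:ℝ) ^ p := Real.one_le_rpow hn1' hp0.le
    have hninv : ((n:ℝ)) ^ (-p) ≤ 1 := by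
      rw [Real.rpow_neg hn0.le]
      exact inv_le_one_of_one_le₀ hnp1
    have hmle : |(m:ℝ)| ≤ (1 + |(j:ℝ)|) * (n:ℝ) := by
      have h1 : (n:ℝ) = |(j:ℝ) - (m:ℝ)| := by
        rw [hn, Nat.cast_natAbs]
        push_cast
        ring_nf
      have h2 : |(m:ℝ)| ≤ |(j:ℝ)| + |(j:ℝ) - (m:ℝ)| := by
        have h4 := abs_sub_abs_le_abs_sub (m:ℝ) (j:ℝ)
        rw [abs_sub_comm] at h4
        linarith
      calc |(m:ℝ)| ≤ |(j:ℝ)| + |(j:ℝ) - (m:ℝ)| := h2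
        _ = |(j:ℝ)| + (n:ℝ) := by rw [h1]
        _ ≤ (1 + |(j:ℝ)|) * (n:ℝ) := by nlinarith [abs_nonneg (j:ℝ)]
    have hmp : ((|m| : ℤ) : ℝ) ^ p ≤ (1 + |(j:ℝ)|) ^ p * (n:ℝ) ^ p := by
      rw [hmabs, ← Real.mul_rpow (by positivity) hn0.le]
      exact Real.rpow_le_rpow (abs_nonneg _) hmle hp0.le
    have hkey : ((n:ℝ)) ^ (-p) * (1 + ((|m| : ℤ) : ℝ) ^ p) ≤ 1 + (1 + |(j:ℝ)|) ^ p := by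
      have h4 : ((n:ℝ)) ^ (-p) * ((|m| : ℤ) : ℝ) ^ p ≤ (1 + |(j:ℝ)|) ^ p := by
        rw [Real.rpow_neg hn0.le]
        calc ((n:ℝ) ^ p)⁻¹ * ((|m| : ℤ) : ℝ) ^ p
            ≤ ((n:ℝ) ^ p)⁻¹ * ((1 + |(j:ℝ)|) ^ p * (n:ℝ) ^ p) := by
              apply mul_le_mul_of_nonneg_left hmp
              positivity
          _ = (1 + |(j:ℝ)|) ^ p := by
              field_simp
      have h5 : (0:ℝ) ≤ ((n:ℝ)) ^ (-p) := Real.rpow_nonneg hn0.le _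
      calc ((n:ℝ)) ^ (-p) * (1 + ((|m| : ℤ) : ℝ) ^ p)
          = ((n:ℝ)) ^ (-p) + ((n:ℝ)) ^ (-p) * ((|m| : ℤ) : ℝ) ^ p := by ring
        _ ≤ 1 + (1 + |(j:ℝ)|) ^ p := add_le_add hninv h4
    calc Rsh s h (j - m) * (1 + ((|m| : ℤ) : ℝ) ^ p)
        ≤ B * (n:ℝ) ^ (-p) * (1 + ((|m| : ℤ) : ℝ) ^ p) := by
          apply mul_le_mul_of_nonneg_right _ hden.le
          exact hRle
      _ = B * ((n:ℝ) ^ (-p) * (1 + ((|m| : ℤ) : ℝ) ^ p)) := by ring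
      _ ≤ B * (1 + (1 + |(j:ℝ)|) ^ p) := mul_le_mul_of_nonneg_left hkey hBpos.le

end final

/-- For `u` in the class `ℓ_s`, the two pointwise formulas of the discrete fractional
Laplacian converge absolutely and agree. Here `u m` stands for `u(mh)`. -/
theorem two_formulas_agree (s h : ℝ) (hs0 : 0 < s) (hs1 : s < 1) (hh : 0 < h)
    (u : ℤ → ℝ)
    (hu : Summable fun m : ℤ => |u m| / (1 + ((|m| : ℤ) : ℝ) ^ (1 + 2 * s))) :
    ∀ j : ℤ,
      (Summable fun m : {m : ℤ // m ≠ j} => |(u j - u m.1) * Rsh s h (j - m.1)|) ∧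
      (Summable fun n : ℤ => |Ksh s h (j - n) * u n|) ∧
      (∑' m : {m : ℤ // m ≠ j}, (u j - u m.1) * Rsh s h (j - m.1)) =
        ∑' n : ℤ, Ksh s h (j - n) * u n := by
  intro j
  have hR0 : Rsh s h 0 = 0 := by simp [Rsh]
  have hRnn : ∀ m : ℤ, 0 ≤ Rsh s h m := Rsh_nonneg hs0 hs1 hh
  set Cj : ℝ := dflC s / h ^ (2*s) * dflA s 1 * (1 + (1 + |(j:ℝ)|) ^ (1+2*s)) with hCj
  have hCjnn : 0 ≤ Cj := by
    have hA1 := dflA_pos hs0 hs1 (le_refl 1)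
    have hC := dflC_pos hs0 hs1
    have hhp : (0:ℝ) < h ^ (2*s) := Real.rpow_pos_of_pos hh _
    have hjp : (0:ℝ) ≤ (1 + |(j:ℝ)|) ^ (1+2*s) := Real.rpow_nonneg (by positivity) _
    positivity
  have hdenpos : ∀ m : ℤ, (0:ℝ) < 1 + ((|m| : ℤ) : ℝ) ^ (1 + 2*s) := by
    intro m
    have : (0:ℝ) ≤ ((|m| : ℤ) : ℝ) ^ (1 + 2*s) := by
      apply Real.rpow_nonneg
      rw [Int.cast_abs]
      exact abs_nonneg _
    linarith
  -- summability of m ↦ Rsh (j - m)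
  have hRsum : Summable (fun m : ℤ => Rsh s h m) := (Rsh_hasSum hs0 hs1 hh).summable
  have h1 : Summable (fun m : ℤ => Rsh s h (j - m)) := by
    have := (Equiv.subLeft j).summable_iff (f := fun m : ℤ => Rsh s h m)
    exact this.mpr hRsum
  -- summability of m ↦ |u m| * Rsh (j - m)
  have h2 : Summable (fun m : ℤ => |u m| * Rsh s h (j - m)) := by
    apply Summable.of_nonneg_of_le (fun m => mul_nonneg (abs_nonneg _) (hRnn _)) (fun m => ?_) (hu.mul_left Cj)
    have hb := dfl_bound hs0 hs1 hh j m
    calc |u m| * Rsh s h (j - m)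
        ≤ |u m| * (Cj / (1 + ((|m| : ℤ) : ℝ) ^ (1 + 2*s))) :=
          mul_le_mul_of_nonneg_left hb (abs_nonneg _)
      _ = Cj * (|u m| / (1 + ((|m| : ℤ) : ℝ) ^ (1 + 2*s))) := by ring
  have h2' : Summable (fun m : ℤ => u m * Rsh s h (j - m)) := by
    apply Summable.of_abs
    apply h2.congr
    intro m
    rw [abs_mul, abs_of_nonneg (hRnn _)]
  -- the F function and its summability
  have hF : Summable (fun m : ℤ => |(u j - u m) * Rsh s h (j - m)|) := by
    apply Summable.of_nonneg_of_le (fun m => abs_nonneg _) (fun m => ?_)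
      ((h1.mul_left |u j|).add h2)
    rw [abs_mul, abs_of_nonneg (hRnn _)]
    calc |u j - u m| * Rsh s h (j - m)
        ≤ (|u j| + |u m|) * Rsh s h (j - m) :=
          mul_le_mul_of_nonneg_right (abs_sub (u j) (u m)) (hRnn _)
      _ = |u j| * Rsh s h (j - m) + |u m| * Rsh s h (j - m) := by ring
  have hF' : Summable (fun m : ℤ => (u j - u m) * Rsh s h (j - m)) := hF.of_abs
  -- G pointwise rewriting
  have hIte : Summable (fun n : ℤ => if n = j then Ksh s h 0 * u j else 0) :=
    (hasSum_ite_eq j (Ksh s h 0 * u j)).summable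
  have hGfun : (fun n : ℤ => Ksh s h (j - n) * u n)
      = fun n : ℤ => (if n = j then Ksh s h 0 * u j else 0) - u n * Rsh s h (j - n) := by
    funext n
    rcases eq_or_ne n j with rfl | hnj
    · simp [hR0]
    · rw [if_neg hnj, zero_sub]
      have hsub : j - n ≠ 0 := by omega
      rw [Ksh_eq_neg_Rsh_s6 hs0 hs1 hh _ hsub]
      ring
  have hG : Summable (fun n : ℤ => |Ksh s h (j - n) * u n|) :=
    ((hIte.sub h2').abs).congr fun n => by rw [congrFun hGfun n]
  refine ⟨?_, hG, ?_⟩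
  · exact hF.subtype {m : ℤ | m ≠ j}
  · -- the equality
    have hsupp : Function.support (fun m : ℤ => (u j - u m) * Rsh s h (j - m))
        ⊆ {m : ℤ | m ≠ j} := by
      intro m hm
      simp only [Function.mem_support] at hm
      intro hmj
      apply hm
      rw [hmj]
      simp [hR0]
    have hE1 : (∑' m : {m : ℤ // m ≠ j}, (u j - u m.1) * Rsh s h (j - m.1))
        = ∑' m : ℤ, (u j - u m) * Rsh s h (j - m) :=
      tsum_subtype_eq_of_support_subset hsupp
    have hE3 : (∑' m : ℤ, Rsh s h (j - m)) = Ksh s h 0 := by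
      have e := (Equiv.subLeft j).tsum_eq (f := fun m : ℤ => Rsh s h m)
      simp only [Equiv.subLeft_apply] at e
      rw [e, (Rsh_hasSum hs0 hs1 hh).tsum_eq]
    have hE2 : (∑' m : ℤ, (u j - u m) * Rsh s h (j - m))
        = u j * Ksh s h 0 - ∑' m : ℤ, u m * Rsh s h (j - m) := by
      have hfun : (fun m : ℤ => (u j - u m) * Rsh s h (j - m))
          = fun m : ℤ => u j * Rsh s h (j - m) - u m * Rsh s h (j - m) := by
        funext m
        ring
      rw [hfun, Summable.tsum_sub (h1.mul_left (u j)) h2', tsum_mul_left, hE3]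
    have hE4 : (∑' n : ℤ, Ksh s h (j - n) * u n)
        = Ksh s h 0 * u j - ∑' m : ℤ, u m * Rsh s h (j - m) := by
      rw [hGfun, Summable.tsum_sub hIte h2', (hasSum_ite_eq j (Ksh s h 0 * u j)).tsum_eq]
    rw [hE1, hE2, hE4]
    ring
end

section
/- Let 0 < s < 1 and n ∈ ℤ. Then (1/(2π)) ∫_{−π}^{π} (4 sin²(θ/2))^s cos(nθ) dθ = (−1)^n Γ(2s+1)/(Γ(1+s+n) Γ(1+s−n)); that is, the Fourier coefficients of the symbol θ ↦ (4 sin²(θ/2))^s on [−π,π] are exactly the kernel values K^s_1(n) of the discrete fractional Laplacian with mesh size h = 1. -/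
open Real Set MeasureTheory intervalIntegral
open scoped Interval


lemma realBeta {a b : ℝ} (ha : 0 < a) (hb : 0 < b) :
    ∫ t in (0:ℝ)..1, t ^ (a - 1) * (1 - t) ^ (b - 1) =
      Real.Gamma a * Real.Gamma b / Real.Gamma (a + b) := by
  have h := Complex.Gamma_mul_Gamma_eq_betaIntegral (s := (a : ℂ)) (t := (b : ℂ))
    (by simpa using ha) (by simpa using hb)
  have hβ : Complex.betaIntegral a b =
      ((∫ t in (0:ℝ)..1, t ^ (a - 1) * (1 - t) ^ (b - 1) : ℝ) : ℂ) := by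
    rw [Complex.betaIntegral, ← intervalIntegral.integral_ofReal]
    refine intervalIntegral.integral_congr fun x hx => ?_
    rw [uIcc_of_le zero_le_one] at hx
    rw [Complex.ofReal_mul, Complex.ofReal_cpow hx.1,
      Complex.ofReal_cpow (by linarith [hx.2] : (0:ℝ) ≤ 1 - x)]
    push_cast
    ring
  have hG : Real.Gamma (a + b) ≠ 0 := (Real.Gamma_pos_of_pos (by linarith)).ne'
  have : ((Real.Gamma a * Real.Gamma b : ℝ) : ℂ) =
      ((Real.Gamma (a + b) * ∫ t in (0:ℝ)..1, t ^ (a - 1) * (1 - t) ^ (b - 1) : ℝ) : ℂ) := by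
    push_cast
    rw [← Complex.Gamma_ofReal, ← Complex.Gamma_ofReal, ← Complex.Gamma_ofReal] at *
    rw [h, hβ]
    push_cast
    ring
  have := Complex.ofReal_inj.mp this
  field_simp
  linarith [this]


lemma J0_eq (s : ℝ) (hs0 : 0 < s) :
    ∫ θ in (0:ℝ)..π, (4 * Real.sin (θ / 2) ^ 2) ^ s =
      (4:ℝ) ^ s * (Real.Gamma (s + 1/2) * Real.Gamma (1/2) / Real.Gamma (s + 1)) := by
  set f : ℝ → ℝ := fun θ => Real.sin (θ / 2) ^ 2 with hf_def
  set f' : ℝ → ℝ := fun θ => Real.sin (θ / 2) * Real.cos (θ / 2) with hf'_def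
  set g : ℝ → ℝ := fun t => (4:ℝ) ^ s * (t ^ (s + 1/2 - 1) * (1 - t) ^ ((1:ℝ)/2 - 1)) with hg_def
  have hπ : (0:ℝ) ≤ π := pi_pos.le
  have hmin : min (0:ℝ) π = 0 := min_eq_left hπ
  have hmax : max (0:ℝ) π = π := max_eq_right hπ
  have hfc : Continuous f := by fun_prop
  have hderiv : ∀ x, HasDerivAt f (f' x) x := by
    intro x
    have h1 : HasDerivAt (fun θ : ℝ => θ / 2) (1/2) x := (hasDerivAt_id x).div_const 2
    have h2 : HasDerivAt (fun θ : ℝ => Real.sin (θ / 2)) (Real.cos (x/2) * (1/2)) x :=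
      by have := (Real.hasDerivAt_sin (x/2)).comp x h1; exact this
    have h3 := h2.fun_pow 2
    refine h3.congr_deriv ?_
    simp [hf'_def]
    ring
  -- image facts
  have himg_oo : f '' Ioo 0 π ⊆ Ioo 0 1 := by
    rintro t ⟨x, hx, rfl⟩
    have h1 : 0 < Real.sin (x/2) :=
      Real.sin_pos_of_pos_of_lt_pi (by linarith [hx.1]) (by linarith [hx.2, pi_pos])
    have h2 : 0 < Real.cos (x/2) :=
      Real.cos_pos_of_mem_Ioo ⟨by linarith [hx.1, pi_pos], by linarith [hx.2]⟩
    have h3 := Real.sin_sq_add_cos_sq (x/2)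
    constructor <;> simp only [hf_def] <;> nlinarith
  have himg_cc : f '' (Set.uIcc (0:ℝ) π) ⊆ Icc 0 1 := by
    rintro t ⟨x, hx, rfl⟩
    simp only [hf_def]
    constructor
    · positivity
    · have := Real.sin_sq_add_cos_sq (x/2)
      nlinarith [sq_nonneg (Real.cos (x/2))]
  -- integrability of g on Icc 0 1
  have hgint : IntegrableOn g (Icc (0:ℝ) 1) := by
    have hc := Complex.betaIntegral_convergent (u := (s:ℂ) + 1/2) (v := 1/2)
      (by simp; positivity) (by norm_num)
    rw [intervalIntegrable_iff_integrableOn_Ioc_of_le zero_le_one] at hc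
    have hre : IntegrableOn (fun x : ℝ =>
        Complex.re ((x:ℂ) ^ ((s:ℂ) + 1/2 - 1) * (1 - (x:ℂ)) ^ ((1:ℂ)/2 - 1))) (Ioc (0:ℝ) 1) :=
      hc.re
    have heq : ∀ x ∈ Ioc (0:ℝ) 1,
        Complex.re ((x:ℂ) ^ ((s:ℂ) + 1/2 - 1) * (1 - (x:ℂ)) ^ ((1:ℂ)/2 - 1)) =
          x ^ (s + 1/2 - 1) * (1 - x) ^ ((1:ℝ)/2 - 1) := by
      intro x hx
      have key : ((x ^ (s + 1/2 - 1) * (1 - x) ^ ((1:ℝ)/2 - 1) : ℝ) : ℂ) =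
          (x:ℂ) ^ ((s:ℂ) + 1/2 - 1) * (1 - (x:ℂ)) ^ ((1:ℂ)/2 - 1) := by
        rw [Complex.ofReal_mul, Complex.ofReal_cpow hx.1.le,
          Complex.ofReal_cpow (by linarith [hx.2] : (0:ℝ) ≤ 1 - x)]
        push_cast
        ring
      rw [← key, Complex.ofReal_re]
    have : IntegrableOn (fun x : ℝ => x ^ (s + 1/2 - 1) * (1 - x) ^ ((1:ℝ)/2 - 1))
        (Ioc (0:ℝ) 1) := by
      refine hre.congr_fun heq measurableSet_Ioc
    rw [integrableOn_Icc_iff_integrableOn_Ioc]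
    exact (this.const_mul _)
  -- continuity of g on the open image
  have hg_cont : ContinuousOn g (f '' Ioo 0 π) := by
    refine ContinuousOn.mono ?_ himg_oo
    intro t ht
    refine ContinuousWithinAt.mono ?_ (subset_univ _)
    refine (ContinuousAt.continuousWithinAt ?_)
    refine ContinuousAt.mul continuousAt_const (ContinuousAt.mul ?_ ?_)
    · exact Real.continuousAt_rpow_const t _ (Or.inl ht.1.ne')
    · exact ContinuousAt.rpow_const (continuousAt_const.sub continuousAt_id)
        (Or.inl (by show (1:ℝ) - t ≠ 0; intro h; nlinarith [ht.2]))
  -- a.e. pointwise identity on (0, π]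
  have hae : ∀ᵐ (x : ℝ), x ≠ π := by
    rw [MeasureTheory.ae_iff]
    have : {x : ℝ | ¬x ≠ π} = {π} := by ext y; simp
    rw [this]
    exact Real.volume_singleton
  have hpt : ∀ x ∈ Ioo (0:ℝ) π, f' x • g (f x) = (4 * Real.sin (x / 2) ^ 2) ^ s := by
    intro x hx
    set p := Real.sin (x/2) with hp_def
    set q := Real.cos (x/2) with hq_def
    have hp : 0 < p := Real.sin_pos_of_pos_of_lt_pi (by linarith [hx.1]) (by linarith [hx.2, pi_pos])
    have hq : 0 < q := Real.cos_pos_of_mem_Ioo ⟨by linarith [hx.1, pi_pos], by linarith [hx.2]⟩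
    have hpq : p^2 + q^2 = 1 := Real.sin_sq_add_cos_sq (x/2)
    have e0 : (1:ℝ) - p^2 = q^2 := by linarith
    have c1 : ((2:ℕ):ℝ) * (s + 1/2 - 1) = 2*s - 1 := by push_cast; ring
    have c2 : ((2:ℕ):ℝ) * ((1:ℝ)/2 - 1) = -1 := by push_cast; ring
    have c3 : ((2:ℕ):ℝ) * s = 2*s := by push_cast; ring
    have e1 : (p^2 : ℝ) ^ (s + 1/2 - 1) = p ^ (2*s - 1) := by
      rw [← Real.rpow_natCast p 2, ← Real.rpow_mul hp.le, c1]
    have e2 : (q^2 : ℝ) ^ ((1:ℝ)/2 - 1) = q ^ (-1 : ℝ) := by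
      rw [← Real.rpow_natCast q 2, ← Real.rpow_mul hq.le, c2]
    have e3 : (p^2 : ℝ) ^ s = p ^ (2*s) := by
      rw [← Real.rpow_natCast p 2, ← Real.rpow_mul hp.le, c3]
    have e4 : p * p ^ (2*s - 1) = p ^ (2*s) := by
      nth_rewrite 1 [← Real.rpow_one p]
      rw [← Real.rpow_add hp]
      norm_num
    simp only [hf_def, hf'_def, hg_def, smul_eq_mul, ← hp_def, ← hq_def]
    rw [e0, e1, e2, Real.mul_rpow (by norm_num : (0:ℝ) ≤ 4) (sq_nonneg p), e3,
      Real.rpow_neg_one]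
    field_simp
    linear_combination e4
  -- the substitution
  have hu_cont : Continuous (fun x : ℝ => (4 * Real.sin (x / 2) ^ 2) ^ s) := by
    rw [continuous_iff_continuousAt]
    intro x
    exact ContinuousAt.rpow_const (by fun_prop) (Or.inr hs0.le)
  have hgf_int : IntegrableOn (fun x => f' x • g (f x)) (Set.uIcc (0:ℝ) π) := by
    have hu_int : IntegrableOn (fun x : ℝ => (4 * Real.sin (x / 2) ^ 2) ^ s)
        (Set.uIcc (0:ℝ) π) := hu_cont.integrableOn_uIcc
    have heq : ∀ᵐ x ∂(volume.restrict (Set.uIcc (0:ℝ) π)),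
        (4 * Real.sin (x / 2) ^ 2) ^ s = f' x • g (f x) := by
      filter_upwards [MeasureTheory.ae_restrict_mem measurableSet_uIcc,
        MeasureTheory.ae_restrict_of_ae hae] with x hx hxπ
      rw [Set.uIcc_of_le hπ] at hx
      rcases eq_or_lt_of_le hx.1 with h0 | h0
      · rw [← h0]
        simp [hf'_def, hf_def, Real.zero_rpow hs0.ne']
      · exact (hpt x ⟨h0, lt_of_le_of_ne hx.2 hxπ⟩).symm
    exact hu_int.congr heq
  have hsub := intervalIntegral.integral_comp_smul_deriv''' (a := (0:ℝ)) (b := π)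
    (f := f) (f' := f') (g := g) hfc.continuousOn
    (by rw [hmin, hmax]; exact fun x hx => (hderiv x).hasDerivWithinAt)
    (by rw [hmin, hmax]; exact hg_cont)
    (hgint.mono_set himg_cc)
    hgf_int
  have hf0 : f 0 = 0 := by simp [hf_def]
  have hfπ : f π = 1 := by
    simp only [hf_def]
    rw [show π / 2 = π/2 from rfl, Real.sin_pi_div_two]
    norm_num
  have hlhs : (∫ θ in (0:ℝ)..π, (4 * Real.sin (θ / 2) ^ 2) ^ s)
      = ∫ x in (0:ℝ)..π, f' x • g (f x) := by
    refine intervalIntegral.integral_congr_ae ?_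
    filter_upwards [hae] with x hxπ hx
    rw [Set.uIoc_of_le hπ] at hx
    exact (hpt x ⟨hx.1, lt_of_le_of_ne hx.2 hxπ⟩).symm
  rw [hlhs, show (∫ x in (0:ℝ)..π, f' x • g (f x)) = ∫ x in (0:ℝ)..π, f' x • (g ∘ f) x from rfl, hsub, hf0, hfπ, hg_def]
  rw [intervalIntegral.integral_const_mul]
  have hβ := realBeta (a := s + 1/2) (b := (1:ℝ)/2) (by positivity) (by norm_num)
  rw [show s + 1/2 + (1:ℝ)/2 = s + 1 from by ring] at hβ
  rw [hβ]



lemma ucont (s : ℝ) (hs0 : 0 < s) :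
    Continuous (fun x : ℝ => (4 * Real.sin (x / 2) ^ 2) ^ s) := by
  rw [continuous_iff_continuousAt]
  intro x
  exact ContinuousAt.rpow_const (by fun_prop) (Or.inr hs0.le)

lemma recur (s : ℝ) (hs0 : 0 < s) (m : ℕ) :
    (s - m) * (∫ θ in (0:ℝ)..π, (4 * Real.sin (θ/2)^2) ^ s * Real.cos ((m : ℝ) * θ))
      + (s + m + 1) *
        (∫ θ in (0:ℝ)..π, (4 * Real.sin (θ/2)^2) ^ s * Real.cos (((m : ℝ)+1) * θ)) = 0 := by
  set u : ℝ → ℝ := fun θ => (4 * Real.sin (θ/2)^2) ^ s with hu_def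
  set M : ℝ := (m : ℝ) + 1/2 with hM_def
  set G : ℝ → ℝ := fun θ => u θ * Real.sin (θ/2) * Real.cos (M * θ) with hG_def
  set D : ℝ → ℝ := fun θ => u θ / 2 *
    ((s - m) * Real.cos ((m : ℝ) * θ) + (s + m + 1) * Real.cos (((m : ℝ)+1) * θ)) with hD_def
  have hπ : (0:ℝ) ≤ π := pi_pos.le
  have huc : Continuous u := ucont s hs0
  have hGc : Continuous G := by fun_prop
  have hDc : Continuous D := by fun_prop
  have hDer : ∀ x ∈ Ioo (0:ℝ) π, HasDerivAt G (D x) x := by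
    intro x hx
    set p := Real.sin (x/2) with hp_def
    set q := Real.cos (x/2) with hq_def
    have hp : 0 < p := Real.sin_pos_of_pos_of_lt_pi (by linarith [hx.1]) (by linarith [hx.2, pi_pos])
    have hb : (0:ℝ) < 4 * p^2 := by positivity
    have hbd : HasDerivAt (fun θ : ℝ => 4 * Real.sin (θ/2)^2) (4 * (p * q)) x := by
      have h1 : HasDerivAt (fun θ : ℝ => θ / 2) (1/2) x := (hasDerivAt_id x).div_const 2
      have h2 : HasDerivAt (fun θ : ℝ => Real.sin (θ / 2)) (q * (1/2)) x :=
        by have := (Real.hasDerivAt_sin (x/2)).comp x h1; exact this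
      have h3 := (h2.fun_pow 2).const_mul (4:ℝ)
      refine h3.congr_deriv ?_
      simp [← hp_def]
      ring
    have hu' : HasDerivAt u ((s * (4 * p^2) ^ (s - 1)) * (4 * (p * q))) x := by
      have := (Real.hasDerivAt_rpow_const (x := 4 * p^2) (p := s) (Or.inl hb.ne')).comp x hbd
      exact this
    have hsin : HasDerivAt (fun θ : ℝ => Real.sin (θ/2)) (q * (1/2)) x :=
      by have := (Real.hasDerivAt_sin (x/2)).comp x ((hasDerivAt_id x).div_const 2); exact this
    have hcosM : HasDerivAt (fun θ : ℝ => Real.cos (M * θ)) (-Real.sin (M * x) * M) x := by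
      have h1 : HasDerivAt (fun θ : ℝ => M * θ) M x := by
        simpa using (hasDerivAt_id x).const_mul M
      exact (Real.hasDerivAt_cos (M * x)).comp x h1
    have hG' := (hu'.fun_mul hsin).fun_mul hcosM
    refine hG'.congr_deriv ?_
    have hE : (4 * p^2) ^ s = (4 * p^2) ^ (s - 1) * (4 * p^2) := by
      rw [← Real.rpow_add_one hb.ne' (s-1)]
      ring_nf
    have hc1 : (m : ℝ) * x = M * x - x/2 := by rw [hM_def]; ring
    have hc2 : ((m : ℝ) + 1) * x = M * x + x/2 := by rw [hM_def]; ring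
    simp only [hD_def, hu_def, ← hp_def, ← hq_def, hc1, hc2, Real.cos_sub, Real.cos_add]
    rw [hE]
    ring
  have hG0 : G 0 = 0 := by simp [hG_def]
  have hGπ : G π = 0 := by
    have : Real.cos (M * π) = 0 := by
      rw [hM_def, show ((m : ℝ) + 1/2) * π = m * π + π/2 by ring, Real.cos_add]
      simp [Real.sin_nat_mul_pi]
    simp [hG_def, this]
  have hFTC := intervalIntegral.integral_eq_sub_of_hasDeriv_right_of_le hπ
    hGc.continuousOn (fun x hx => (hDer x hx).hasDerivWithinAt)
    (hDc.intervalIntegrable 0 π)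
  rw [hG0, hGπ, sub_zero] at hFTC
  -- split the integral
  have hint1 : IntervalIntegrable (fun θ => u θ * Real.cos ((m:ℝ) * θ)) volume 0 π :=
    (by fun_prop : Continuous fun θ => u θ * Real.cos ((m:ℝ) * θ)).intervalIntegrable 0 π
  have hint2 : IntervalIntegrable (fun θ => u θ * Real.cos (((m:ℝ)+1) * θ)) volume 0 π :=
    (by fun_prop : Continuous fun θ => u θ * Real.cos (((m:ℝ)+1) * θ)).intervalIntegrable 0 π
  have hsplit : (∫ θ in (0:ℝ)..π, D θ)
      = (s - m)/2 * (∫ θ in (0:ℝ)..π, u θ * Real.cos ((m:ℝ) * θ))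
        + (s + m + 1)/2 * (∫ θ in (0:ℝ)..π, u θ * Real.cos (((m:ℝ)+1) * θ)) := by
    rw [← intervalIntegral.integral_const_mul, ← intervalIntegral.integral_const_mul,
      ← intervalIntegral.integral_add (hint1.const_mul _) (hint2.const_mul _)]
    refine intervalIntegral.integral_congr fun x hx => ?_
    simp only [hD_def]
    ring
  rw [hFTC] at hsplit
  simp only [hu_def] at hsplit
  linarith [hsplit]

lemma Gamma_shift_ne_zero (s : ℝ) (hs0 : 0 < s) (hs1 : s < 1) (m : ℕ) :
    Real.Gamma (1 + s - m) ≠ 0 := by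
  apply Real.Gamma_ne_zero
  intro k h
  have h1 : s = (m : ℝ) - k - 1 := by linarith
  rcases le_or_gt m (k + 1) with hc | hc
  · have : (m : ℝ) ≤ (k : ℝ) + 1 := by exact_mod_cast hc
    linarith
  · have : (k : ℝ) + 2 ≤ (m : ℝ) := by exact_mod_cast hc
    linarith

lemma s_ne_nat (s : ℝ) (hs0 : 0 < s) (hs1 : s < 1) (m : ℕ) : s - (m : ℝ) ≠ 0 := by
  rcases Nat.eq_zero_or_pos m with h | h
  · subst h; simpa using hs0.ne'
  · have : (1 : ℝ) ≤ (m : ℝ) := by exact_mod_cast h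
    intro hc; linarith

lemma Jval (s : ℝ) (hs0 : 0 < s) (hs1 : s < 1) (m : ℕ) :
    (∫ θ in (0:ℝ)..π, (4 * Real.sin (θ/2)^2) ^ s * Real.cos ((m : ℝ) * θ))
      = π * ((-1 : ℝ)^m * Real.Gamma (2*s+1) /
          (Real.Gamma (1 + s + m) * Real.Gamma (1 + s - m))) := by
  induction m with
  | zero =>
    have h0 : (∫ θ in (0:ℝ)..π, (4 * Real.sin (θ/2)^2) ^ s * Real.cos (((0:ℕ) : ℝ) * θ))
        = ∫ θ in (0:ℝ)..π, (4 * Real.sin (θ/2)^2) ^ s := by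
      refine intervalIntegral.integral_congr fun x hx => ?_
      norm_num
    rw [h0, J0_eq s hs0, Real.Gamma_one_half_eq]
    have hΓs : 0 < Real.Gamma s := Real.Gamma_pos_of_pos hs0
    have hΓ2s : 0 < Real.Gamma (2*s) := Real.Gamma_pos_of_pos (by linarith)
    have hΓsh : 0 < Real.Gamma (s + 1/2) := Real.Gamma_pos_of_pos (by linarith)
    have dup := Real.Gamma_mul_Gamma_add_half s
    have h2s1 : Real.Gamma (2*s+1) = 2*s * Real.Gamma (2*s) := by
      rw [Real.Gamma_add_one (by positivity : (2*s) ≠ 0)]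
    have hs1' : Real.Gamma (s+1) = s * Real.Gamma s := Real.Gamma_add_one hs0.ne'
    have h4 : (4:ℝ)^s * (2:ℝ)^(1-2*s) = 2 := by
      have h22 : (2:ℝ)^((2:ℝ)) = 4 := by
        rw [show ((2:ℝ)) = ((2:ℕ):ℝ) by norm_num, Real.rpow_natCast]
        norm_num
      have : (4:ℝ)^s = (2:ℝ)^(2*s) := by
        rw [Real.rpow_mul (by norm_num : (0:ℝ) ≤ 2) 2 s, h22]
      rw [this, ← Real.rpow_add (by norm_num : (0:ℝ) < 2)]
      norm_num
    have hsqπ : Real.sqrt π * Real.sqrt π = π := Real.mul_self_sqrt pi_pos.le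
    push_cast
    rw [show (1:ℝ) + s + 0 = s + 1 by ring, show (1:ℝ) + s - 0 = s + 1 by ring]
    have hΓshval : Real.Gamma (s + 1/2) = Real.Gamma (2*s) * 2^(1-2*s) * √π / Real.Gamma s := by
      rw [eq_div_iff hΓs.ne']
      linarith [dup]
    rw [hΓshval, hs1', h2s1]
    have key : (4:ℝ)^s * (2:ℝ)^(1-2*s) * (√π * √π) = 2 * π := by
      linear_combination h4 * (√π*√π) + 2*hsqπ
    field_simp
    linear_combination key
  | succ m ih =>
    have hrec := recur s hs0 m
    have hd : (s + (m:ℝ) + 1) ≠ 0 := by positivity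
    have hJ : (∫ θ in (0:ℝ)..π, (4 * Real.sin (θ/2)^2) ^ s * Real.cos ((((m+1):ℕ) : ℝ) * θ))
        = ((m:ℝ) - s)/(s + m + 1) *
          (∫ θ in (0:ℝ)..π, (4 * Real.sin (θ/2)^2) ^ s * Real.cos ((m : ℝ) * θ)) := by
      push_cast
      rw [div_mul_eq_mul_div, eq_div_iff hd]
      linear_combination hrec
    rw [hJ, ih]
    have hΓm : Real.Gamma (1 + s + m) ≠ 0 := (Real.Gamma_pos_of_pos (by positivity)).ne'
    have hΓmm : Real.Gamma (1 + s - m) ≠ 0 := Gamma_shift_ne_zero s hs0 hs1 m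
    have hΓmm1 : Real.Gamma (1 + s - ((m:ℕ)+1:ℕ)) ≠ 0 := Gamma_shift_ne_zero s hs0 hs1 (m+1)
    have hsm : s - (m : ℝ) ≠ 0 := s_ne_nat s hs0 hs1 m
    have hA : Real.Gamma (1 + s + (((m+1):ℕ) : ℝ)) = (1 + s + m) * Real.Gamma (1 + s + m) := by
      push_cast
      rw [show (1:ℝ) + s + ((m:ℝ)+1) = (1 + s + m) + 1 by ring,
        Real.Gamma_add_one (by positivity : (1 + s + (m:ℝ)) ≠ 0)]
    have hB : Real.Gamma (1 + s - (m : ℝ)) = (s - m) * Real.Gamma (1 + s - (((m+1):ℕ) : ℝ)) := by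
      push_cast
      rw [show (1:ℝ) + s - ((m:ℝ)+1) = s - m by ring,
        show (1:ℝ) + s - (m:ℝ) = (s - m) + 1 by ring,
        Real.Gamma_add_one hsm]
    rw [hA]
    rw [hB] at *
    push_cast at *
    field_simp
    ring

lemma neg_one_pow_inv (m : ℕ) : ((-1:ℝ)^m)⁻¹ = (-1:ℝ)^m := by
  rcases Nat.even_or_odd m with he | ho
  · simp [he.neg_one_pow]
  · simp [ho.neg_one_pow]

/-- The Fourier coefficients of the symbol `θ ↦ (4 sin²(θ/2))^s` on `[-π, π]` are the kernel
values `K^s_1(n)` of the discrete fractional Laplacian with mesh size `h = 1`. -/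
theorem fourier_coeff_discrete_kernel (s : ℝ) (hs0 : 0 < s) (hs1 : s < 1) (n : ℤ) :
    (1 / (2 * Real.pi)) *
        ∫ θ in (-Real.pi)..Real.pi, (4 * Real.sin (θ / 2) ^ 2) ^ s * Real.cos (n * θ) =
      (-1 : ℝ) ^ n * Real.Gamma (2 * s + 1) /
        (Real.Gamma (1 + s + (n : ℝ)) * Real.Gamma (1 + s - (n : ℝ))) := by
  set m : ℕ := n.natAbs with hm
  have hcos : ∀ θ : ℝ, Real.cos ((n : ℝ) * θ) = Real.cos ((m : ℝ) * θ) := by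
    intro θ
    rcases Int.natAbs_eq n with h | h <;> rw [← hm] at h
    · rw [h]; push_cast; ring_nf
    · rw [h]; push_cast; rw [neg_mul, Real.cos_neg]
  have hFc : Continuous (fun θ : ℝ => (4 * Real.sin (θ / 2) ^ 2) ^ s * Real.cos ((m:ℝ) * θ)) :=
    (ucont s hs0).mul (by fun_prop)
  have hsym : (∫ θ in (-π)..(0:ℝ), (4 * Real.sin (θ / 2) ^ 2) ^ s * Real.cos ((m:ℝ) * θ))
      = ∫ θ in (0:ℝ)..π, (4 * Real.sin (θ / 2) ^ 2) ^ s * Real.cos ((m:ℝ) * θ) := by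
    have hneg := intervalIntegral.integral_comp_neg (a := (0:ℝ)) (b := π)
      (f := fun θ => (4 * Real.sin (θ / 2) ^ 2) ^ s * Real.cos ((m:ℝ) * θ))
    rw [neg_zero] at hneg
    rw [← hneg]
    refine intervalIntegral.integral_congr fun x hx => ?_
    rw [show -x/2 = -(x/2) by ring, show (m:ℝ) * -x = -((m:ℝ) * x) by ring,
      Real.sin_neg, Real.cos_neg, neg_sq]
  have hsplit : (∫ θ in (-π)..π, (4 * Real.sin (θ / 2) ^ 2) ^ s * Real.cos ((m:ℝ) * θ))
      = 2 * ∫ θ in (0:ℝ)..π, (4 * Real.sin (θ / 2) ^ 2) ^ s * Real.cos ((m:ℝ) * θ) := by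
    rw [← intervalIntegral.integral_add_adjacent_intervals
      (hFc.intervalIntegrable (-π) 0) (hFc.intervalIntegrable 0 π), hsym]
    ring
  simp only [hcos]
  rw [hsplit, show (∫ θ in (0:ℝ)..π, (4 * Real.sin (θ / 2) ^ 2) ^ s * Real.cos ((m:ℝ) * θ))
      = ∫ θ in (0:ℝ)..π, (4 * Real.sin (θ/2)^2) ^ s * Real.cos ((m:ℝ) * θ) from rfl,
    Jval s hs0 hs1 m]
  have hΓ1 : Real.Gamma (1 + s + m) ≠ 0 := (Real.Gamma_pos_of_pos (by positivity)).ne'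
  have hΓ2 : Real.Gamma (1 + s - m) ≠ 0 := Gamma_shift_ne_zero s hs0 hs1 m
  rcases Int.natAbs_eq n with h | h <;> rw [← hm] at h
  · rw [h]
    push_cast
    rw [zpow_natCast]
    field_simp
  · rw [h]
    push_cast
    rw [zpow_neg, zpow_natCast, neg_one_pow_inv]
    rw [show 1 + s + -(m:ℝ) = 1 + s - m by ring, show 1 + s - -(m:ℝ) = 1 + s + m by ring]
    field_simp
end

section
/- Let 0 < α < 1, z ∈ ℝ and t > 0. Set u(τ) := E_{α,1}(z τ^α) for τ ≥ 0, where E_{α,1} is the Mittag-Leffler function. Then the function t ↦ ∫_0^t ((t−τ)^{−α}/Γ(1−α)) (u(τ) − u(0)) dτ is differentiable at t, and its derivative equals z E_{α,1}(z t^α); that is, the Caputo fractional derivative satisfies D_t^α E_{α,1}(z t^α) = z E_{α,1}(z t^α). -/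
/-- The Mittag-Leffler function `E_{α,1}(z) = Σ_{n=0}^∞ z^n/Γ(αn+1)`. -/
noncomputable def mittagLeffler (α z : ℝ) : ℝ :=
  ∑' n : ℕ, z ^ n / Real.Gamma (α * n + 1)

section Aux
open Real Filter MeasureTheory Set Topology

private lemma summable_ml {α β : ℝ} (hα : 0 < α) (hβ : 1 ≤ β) (x : ℝ) :
    Summable fun n : ℕ => x ^ n / Real.Gamma (α * n + β) := by
  set b : ℝ := |x| + 1 with hbdef
  have hb1 : 1 ≤ b := le_add_of_nonneg_left (abs_nonneg x)
  have hb0 : 0 < b := lt_of_lt_of_le one_pos hb1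
  set p : ℕ := ⌈1/α⌉₊ with hpdef
  set B : ℝ := b ^ p with hBdef
  have hB0 : 0 < B := by positivity
  have hk : Tendsto (fun n : ℕ => ⌊α * n⌋₊) atTop atTop :=
    tendsto_nat_floor_atTop.comp (tendsto_natCast_atTop_atTop.const_mul_atTop hα)
  have hfact : ∀ᶠ k : ℕ in atTop, B ^ (k + 1) ≤ (k.factorial : ℝ) := by
    have h0 : Tendsto (fun k : ℕ => B ^ k / (k.factorial : ℝ)) atTop (𝓝 0) :=
      FloorSemiring.tendsto_pow_div_factorial_atTop B
    filter_upwards [h0.eventually_lt_const (by positivity : (0:ℝ) < B⁻¹)] with k hk2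
    have hkf : (0:ℝ) < (k.factorial : ℝ) := by exact_mod_cast k.factorial_pos
    rw [div_lt_iff₀ hkf] at hk2
    have : B ^ k * B ≤ B⁻¹ * (k.factorial : ℝ) * B := by nlinarith
    calc B ^ (k+1) = B ^ k * B := pow_succ B k
    _ ≤ B⁻¹ * (k.factorial : ℝ) * B := this
    _ = (k.factorial : ℝ) := by field_simp
  have hev : ∀ᶠ n : ℕ in atTop, ‖x ^ n / Real.Gamma (α * n + β)‖ ≤ (|x| / b) ^ n := by
    filter_upwards [hk.eventually hfact, hk.eventually_ge_atTop 1] with n h1 h2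
    set k := ⌊α * (n:ℝ)⌋₊ with hkdef
    have hαn : (0:ℝ) ≤ α * n := by positivity
    have hkα : (k : ℝ) ≤ α * n := Nat.floor_le hαn
    have hk1 : (1:ℝ) ≤ (k:ℝ) := by exact_mod_cast h2
    have hΓ2 : (k:ℝ) + 1 ≤ α * n + β := by linarith
    have hfΓ : ((k.factorial : ℝ) : ℝ) ≤ Real.Gamma (α * n + β) := by
      rw [← Real.Gamma_nat_eq_factorial]
      exact Real.Gamma_strictMonoOn_Ici.monotoneOn (by simp; linarith) (by simp; linarith) hΓ2
    -- b ^ n ≤ B ^ (k+1)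
    have hnk : n ≤ (k + 1) * p := by
      have h3 : α * n < (k:ℝ) + 1 := Nat.lt_floor_add_one _
      have h4 : (n:ℝ) < ((k:ℝ) + 1) / α := by
        rw [lt_div_iff₀ hα]; linarith [mul_comm (n:ℝ) α]
      have h5 : ((k:ℝ) + 1) / α ≤ ((k:ℝ) + 1) * p := by
        rw [div_eq_mul_one_div]
        exact mul_le_mul_of_nonneg_left (Nat.le_ceil _) (by positivity)
      have : (n:ℝ) < ((k+1) * p : ℕ) := by push_cast; linarith
      exact_mod_cast this.le
    have hbn : b ^ n ≤ B ^ (k + 1) := by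
      calc b ^ n ≤ b ^ ((k+1) * p) := pow_le_pow_right₀ hb1 hnk
      _ = B ^ (k+1) := by rw [hBdef, ← pow_mul, mul_comm]
    have hΓpos : 0 < Real.Gamma (α * n + β) := by
      have : ((k.factorial : ℝ):ℝ) > 0 := by exact_mod_cast k.factorial_pos
      linarith
    have hbΓ : b ^ n ≤ Real.Gamma (α * n + β) := le_trans hbn (le_trans h1 hfΓ)
    rw [norm_div, norm_pow, Real.norm_eq_abs, Real.norm_eq_abs,
      abs_of_pos hΓpos, div_pow]
    exact div_le_div_of_nonneg_left (by positivity) (by positivity) hbΓ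
  refine summable_of_isBigO_nat (summable_geometric_of_lt_one (by positivity) ?_) hev.isBigO
  rw [div_lt_one hb0]; simp [hbdef]

private lemma real_beta {α s r : ℝ} (hα0 : 0 < α) (hα1 : α < 1) (hs : 0 ≤ s) (hr : 0 < r) :
    ∫ τ in (0:ℝ)..r, τ ^ s * (r - τ) ^ (-α) =
      r ^ (s + 1 - α) * (Real.Gamma (s + 1) * Real.Gamma (1 - α) / Real.Gamma (s + 2 - α)) := by
  have hu : 0 < ((s:ℂ) + 1).re := by simp; linarith
  have hv : 0 < ((1:ℂ) - α).re := by simp [Complex.sub_re]; linarith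
  have hsum : ((s:ℂ) + 1) + ((1:ℂ) - α) = ((s + 2 - α : ℝ) : ℂ) := by push_cast; ring
  have hΓsum : Complex.Gamma (((s:ℂ) + 1) + ((1:ℂ) - α)) ≠ 0 := by
    rw [hsum, Complex.Gamma_ofReal]
    exact_mod_cast (Real.Gamma_pos_of_pos (by linarith)).ne'
  have hbeta := Complex.Gamma_mul_Gamma_eq_betaIntegral hu hv
  have hBval : Complex.betaIntegral ((s:ℂ) + 1) ((1:ℂ) - α) =
      Complex.Gamma ((s:ℂ) + 1) * Complex.Gamma ((1:ℂ) - α) /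
        Complex.Gamma (((s:ℂ) + 1) + ((1:ℂ) - α)) := by
    rw [eq_div_iff hΓsum, hbeta]; ring
  have hscaled := Complex.betaIntegral_scaled ((s:ℂ) + 1) ((1:ℂ) - α) hr
  -- LHS of hscaled equals ofReal of our integral
  have hL : (∫ x in (0:ℝ)..r, (x:ℂ) ^ ((s:ℂ) + 1 - 1) * ((r:ℂ) - (x:ℂ)) ^ (((1:ℂ) - α) - 1))
      = ((∫ τ in (0:ℝ)..r, τ ^ s * (r - τ) ^ (-α) : ℝ) : ℂ) := by
    rw [← intervalIntegral.integral_ofReal]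
    refine intervalIntegral.integral_congr fun x hx => ?_
    rw [uIcc_of_le hr.le] at hx
    have hx0 : (0:ℝ) ≤ x := hx.1
    have hxr : (0:ℝ) ≤ r - x := by linarith [hx.2]
    have e1 : (x:ℂ) ^ ((s:ℂ) + 1 - 1) = ((x ^ s : ℝ) : ℂ) := by
      rw [Complex.ofReal_cpow hx0]; norm_num
    have e2 : ((r:ℂ) - (x:ℂ)) ^ (((1:ℂ) - α) - 1) = (((r - x) ^ (-α) : ℝ) : ℂ) := by
      rw [Complex.ofReal_cpow hxr]; push_cast; ring_nf
    rw [e1, e2]; push_cast; ring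
  have hR : ((r:ℂ)) ^ (((s:ℂ) + 1) + ((1:ℂ) - α) - 1) = ((r ^ (s + 1 - α) : ℝ) : ℂ) := by
    rw [Complex.ofReal_cpow hr.le]
    congr 1
    push_cast; ring
  rw [hL, hR, hBval] at hscaled
  have := hscaled
  have e3 : ((s:ℂ) + 1) = ((s + 1 : ℝ) : ℂ) := by push_cast; ring
  have e4 : ((1:ℂ) - (α:ℂ)) = ((1 - α : ℝ) : ℂ) := by push_cast; ring
  rw [hsum, e3, e4, Complex.Gamma_ofReal, Complex.Gamma_ofReal, Complex.Gamma_ofReal] at this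
  · have h2 : ((∫ τ in (0:ℝ)..r, τ ^ s * (r - τ) ^ (-α) : ℝ) : ℂ)
        = (((r ^ (s + 1 - α) * (Real.Gamma (s + 1) * Real.Gamma (1 - α) / Real.Gamma (s + 2 - α)) : ℝ)) : ℂ) := by
      rw [this]; push_cast; ring
    exact_mod_cast h2

private lemma integrable_kernel {α s r : ℝ} (hα0 : 0 < α) (hα1 : α < 1) (hs : 0 ≤ s)
    (hr : 0 < r) :
    IntegrableOn (fun τ => τ ^ s * (r - τ) ^ (-α)) (Set.Ioc 0 r) := by
  have hbase : IntervalIntegrable (fun x : ℝ => x ^ (-α)) volume 0 r :=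
    intervalIntegral.intervalIntegrable_rpow' (by linarith)
  have hrefl : IntervalIntegrable (fun x : ℝ => (r - x) ^ (-α)) volume 0 r := by
    have := hbase.comp_sub_left r
    simpa using this.symm
  have hker : IntegrableOn (fun x : ℝ => (r - x) ^ (-α)) (Set.Ioc 0 r) :=
    (intervalIntegrable_iff_integrableOn_Ioc_of_le hr.le).mp hrefl
  have hbound : IntegrableOn (fun x : ℝ => r ^ s * (r - x) ^ (-α)) (Set.Ioc 0 r) :=
    hker.const_mul _
  refine Integrable.mono' hbound ?_ ?_
  · apply Measurable.aestronglyMeasurable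
    fun_prop
  · rw [ae_restrict_iff' measurableSet_Ioc]
    filter_upwards with x hx
    have hx0 : (0:ℝ) < x := hx.1
    have hxr : (0:ℝ) ≤ r - x := by linarith [hx.2]
    rw [Real.norm_eq_abs, abs_mul, abs_of_nonneg (Real.rpow_nonneg hx0.le s),
      abs_of_nonneg (Real.rpow_nonneg hxr (-α))]
    exact mul_le_mul_of_nonneg_right (Real.rpow_le_rpow hx0.le hx.2 hs) (Real.rpow_nonneg hxr _)

private lemma ml_zero {α : ℝ} (hα : 0 < α) (z : ℝ) : mittagLeffler α (z * (0:ℝ) ^ α) = 1 := by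
  rw [Real.zero_rpow hα.ne', mul_zero]
  unfold mittagLeffler
  rw [tsum_eq_single 0]
  · simp [Real.Gamma_one]
  · intro n hn; simp [zero_pow hn]

private lemma ml_sub_one {α : ℝ} (hα : 0 < α) (x : ℝ) :
    mittagLeffler α x - 1 = ∑' n : ℕ, x ^ (n + 1) / Real.Gamma (α * ((n:ℝ) + 1) + 1) := by
  unfold mittagLeffler
  rw [(summable_ml hα le_rfl x).tsum_eq_zero_add]
  have h0 : x ^ (0:ℕ) / Real.Gamma (α * (0:ℕ) + 1) = 1 := by
    simp [Real.Gamma_one]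
  rw [h0]
  rw [add_sub_cancel_left]
  exact tsum_congr fun n => by push_cast; ring_nf

private lemma key {α z r : ℝ} (hα0 : 0 < α) (hα1 : α < 1) (hr : 0 < r) :
    (∫ τ in (0:ℝ)..r,
        ((r - τ) ^ (-α) / Real.Gamma (1 - α)) *
          (mittagLeffler α (z * τ ^ α) - mittagLeffler α (z * (0:ℝ) ^ α)))
      = ∑' m : ℕ, z ^ (m + 1) * r ^ (α * m + 1) / Real.Gamma (α * m + 2) := by
  have hΓ1 : 0 < Real.Gamma (1 - α) := Real.Gamma_pos_of_pos (by linarith)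
  set c : ℕ → ℝ := fun n => z ^ (n + 1) / (Real.Gamma (1 - α) * Real.Gamma (α * ((n:ℝ) + 1) + 1))
    with hc
  set h : ℕ → ℝ → ℝ := fun n τ => c n * (τ ^ (α * ((n:ℝ) + 1)) * (r - τ) ^ (-α)) with hh
  have hΓs : ∀ n : ℕ, 0 < Real.Gamma (α * ((n:ℝ) + 1) + 1) := fun n =>
    Real.Gamma_pos_of_pos (by positivity)
  have hpt : ∀ τ ∈ Set.Ioc (0:ℝ) r,
      ((r - τ) ^ (-α) / Real.Gamma (1 - α)) *
          (mittagLeffler α (z * τ ^ α) - mittagLeffler α (z * (0:ℝ) ^ α))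
        = ∑' n : ℕ, h n τ := by
    intro τ hτ
    rw [ml_zero hα0, ml_sub_one hα0]
    rw [← tsum_mul_left]
    refine tsum_congr fun n => ?_
    have hτ0 : (0:ℝ) < τ := hτ.1
    have e1 : (z * τ ^ α) ^ (n + 1) = z ^ (n + 1) * τ ^ (α * ((n:ℝ) + 1)) := by
      rw [mul_pow]
      congr 1
      rw [← Real.rpow_natCast (τ ^ α) (n + 1), ← Real.rpow_mul hτ0.le]
      push_cast; ring_nf
    rw [e1, hh, hc]
    ring
  have hint : ∀ n : ℕ, Integrable (h n) (volume.restrict (Set.Ioc 0 r)) := fun n =>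
    ((integrable_kernel hα0 hα1 (by positivity) hr)).const_mul _
  have hval : ∀ n : ℕ, ∫ τ in Set.Ioc (0:ℝ) r, h n τ
      = z ^ (n + 1) * r ^ (α * n + 1) / Real.Gamma (α * n + 2) := by
    intro n
    rw [hh]
    simp only
    rw [integral_const_mul _ _, ← intervalIntegral.integral_of_le hr.le,
      real_beta hα0 hα1 (by positivity) hr]
    have es1 : α * ((n:ℝ) + 1) + 1 - α = α * n + 1 := by ring
    have es2 : α * ((n:ℝ) + 1) + 2 - α = α * n + 2 := by ring
    rw [es1, es2, hc]
    have h1 := (hΓs n).ne'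
    have h2 := hΓ1.ne'
    have h3 := (Real.Gamma_pos_of_pos (show (0:ℝ) < α * n + 2 by positivity)).ne'
    field_simp
  have hvalnorm : ∀ n : ℕ, ∫ τ in Set.Ioc (0:ℝ) r, ‖h n τ‖
      = |z| ^ (n + 1) * r ^ (α * n + 1) / Real.Gamma (α * n + 2) := by
    intro n
    have : ∀ τ ∈ Set.Ioc (0:ℝ) r, ‖h n τ‖
        = |c n| * (τ ^ (α * ((n:ℝ) + 1)) * (r - τ) ^ (-α)) := by
      intro τ hτ
      have h1 : (0:ℝ) ≤ τ ^ (α * ((n:ℝ) + 1)) := Real.rpow_nonneg hτ.1.le _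
      have h2 : (0:ℝ) ≤ (r - τ) ^ (-α) := Real.rpow_nonneg (by linarith [hτ.2]) _
      rw [hh]
      simp only
      rw [Real.norm_eq_abs, abs_mul, abs_of_nonneg (mul_nonneg h1 h2)]
    rw [MeasureTheory.setIntegral_congr_fun measurableSet_Ioc this,
      integral_const_mul _ _, ← intervalIntegral.integral_of_le hr.le,
      real_beta hα0 hα1 (by positivity) hr]
    have es1 : α * ((n:ℝ) + 1) + 1 - α = α * n + 1 := by ring
    have es2 : α * ((n:ℝ) + 1) + 2 - α = α * n + 2 := by ring
    rw [es1, es2, hc]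
    have h1 := (hΓs n).ne'
    have h2 := hΓ1.ne'
    have h3 := (Real.Gamma_pos_of_pos (show (0:ℝ) < α * n + 2 by positivity)).ne'
    rw [abs_div, abs_pow, abs_mul, abs_of_pos hΓ1, abs_of_pos (hΓs n)]
    field_simp
  have hsum : Summable fun n : ℕ => ∫ τ in Set.Ioc (0:ℝ) r, ‖h n τ‖ := by
    refine Summable.congr (f := fun n : ℕ =>
      (|z| * r) * ((|z| * r ^ α) ^ n / Real.Gamma (α * n + 2)))
      (((summable_ml hα0 (by norm_num : (1:ℝ) ≤ 2) (|z| * r ^ α))).mul_left _) fun n => ?_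
    rw [hvalnorm n]
    have e1 : r ^ (α * n + 1) = (r ^ α) ^ n * r := by
      rw [Real.rpow_add hr, Real.rpow_one, ← Real.rpow_natCast (r ^ α) n,
        ← Real.rpow_mul hr.le]
    rw [e1]
    simp only [mul_pow]
    ring
  rw [intervalIntegral.integral_of_le hr.le,
    MeasureTheory.setIntegral_congr_fun measurableSet_Ioc hpt,
    ← MeasureTheory.integral_tsum_of_summable_integral_norm hint hsum]
  exact tsum_congr hval

private lemma deriv_G {α z t : ℝ} (hα0 : 0 < α) (hα1 : α < 1) (ht : 0 < t) :
    HasDerivAt (fun r : ℝ => ∑' m : ℕ, z ^ (m + 1) * r ^ (α * m + 1) / Real.Gamma (α * m + 2))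
      (z * mittagLeffler α (z * t ^ α)) t := by
  have hΓpos : ∀ m : ℕ, 0 < Real.Gamma (α * m + 1) := fun m =>
    Real.Gamma_pos_of_pos (by positivity)
  have hΓpos2 : ∀ m : ℕ, 0 < Real.Gamma (α * m + 2) := fun m =>
    Real.Gamma_pos_of_pos (by positivity)
  have hΓ2 : ∀ m : ℕ, Real.Gamma (α * m + 2) = (α * m + 1) * Real.Gamma (α * m + 1) := by
    intro m
    have e : α * (m:ℝ) + 2 = (α * m + 1) + 1 := by ring
    rw [e, Real.Gamma_add_one (by positivity)]
  set g' : ℕ → ℝ → ℝ :=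
    fun m r => z ^ (m + 1) * ((α * m + 1) * r ^ (α * m)) / Real.Gamma (α * m + 2) with hg'
  have heg : ∀ m : ℕ, ∀ r : ℝ,
      g' m r = z ^ (m + 1) * r ^ (α * m) / Real.Gamma (α * m + 1) := by
    intro m r
    rw [hg']
    simp only
    rw [hΓ2 m]
    have h1 : α * (m:ℝ) + 1 ≠ 0 := by positivity
    have h2 : Real.Gamma (α * m + 1) ≠ 0 := (hΓpos m).ne'
    field_simp
  set u : ℕ → ℝ := fun m => |z| * ((|z| * (t + 1) ^ α) ^ m / Real.Gamma (α * m + 1)) with hudef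
  have hu : Summable u := (summable_ml hα0 le_rfl _).mul_left _
  have heu : ∀ m : ℕ, u m = |z| ^ (m + 1) * (t + 1) ^ (α * (m:ℝ)) / Real.Gamma (α * m + 1) := by
    intro m
    have e1 : (t + 1) ^ (α * (m:ℝ)) = ((t + 1) ^ α) ^ m := by
      rw [← Real.rpow_natCast ((t + 1) ^ α) m, ← Real.rpow_mul (by linarith)]
    rw [hudef]
    simp only [mul_pow]
    rw [e1]
    ring
  have hopen : IsOpen (Ioo (0:ℝ) (t + 1)) := isOpen_Ioo
  have hconn : IsPreconnected (Ioo (0:ℝ) (t + 1)) := isPreconnected_Ioo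
  have hmem : t ∈ Ioo (0:ℝ) (t + 1) := ⟨ht, by linarith⟩
  have hderiv : ∀ (m : ℕ) (r : ℝ), r ∈ Ioo (0:ℝ) (t + 1) →
      HasDerivAt (fun r : ℝ => z ^ (m + 1) * r ^ (α * m + 1) / Real.Gamma (α * m + 2))
        (g' m r) r := by
    intro m r hrr
    have h := (Real.hasDerivAt_rpow_const (x := r) (p := α * m + 1) (Or.inl hrr.1.ne'))
    have h2 := (h.const_mul (z ^ (m + 1))).div_const (Real.Gamma (α * m + 2))
    have e : α * (m:ℝ) + 1 - 1 = α * m := by ring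
    rw [hg']
    simpa [e] using h2
  have hbound : ∀ (m : ℕ) (r : ℝ), r ∈ Ioo (0:ℝ) (t + 1) → ‖g' m r‖ ≤ u m := by
    intro m r hrr
    rw [heg m r, heu m, Real.norm_eq_abs, abs_div, abs_mul, abs_pow,
      abs_of_nonneg (Real.rpow_nonneg hrr.1.le _), abs_of_pos (hΓpos m)]
    have hrm : r ^ (α * (m:ℝ)) ≤ (t + 1) ^ (α * (m:ℝ)) :=
      Real.rpow_le_rpow hrr.1.le hrr.2.le (by positivity)
    exact (div_le_div_iff_of_pos_right (hΓpos m)).mpr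
      (mul_le_mul_of_nonneg_left hrm (by positivity))
  have hsum0 : Summable fun m : ℕ =>
      z ^ (m + 1) * t ^ (α * m + 1) / Real.Gamma (α * m + 2) := by
    refine Summable.congr (f := fun m : ℕ =>
      (z * t) * ((z * t ^ α) ^ m / Real.Gamma (α * m + 2)))
      ((summable_ml hα0 (by norm_num : (1:ℝ) ≤ 2) (z * t ^ α)).mul_left _) fun m => ?_
    have e1 : t ^ (α * m + 1) = (t ^ α) ^ m * t := by
      rw [Real.rpow_add ht, Real.rpow_one, ← Real.rpow_natCast (t ^ α) m,
        ← Real.rpow_mul ht.le]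
    rw [e1]
    simp only [mul_pow]
    ring
  have hmain := hasDerivAt_tsum_of_isPreconnected hu hopen hconn hderiv hbound hmem hsum0 hmem
  have hfinal : ∑' m : ℕ, g' m t = z * mittagLeffler α (z * t ^ α) := by
    have e : ∀ m : ℕ, g' m t = z * ((z * t ^ α) ^ m / Real.Gamma (α * m + 1)) := by
      intro m
      rw [heg m t]
      have e1 : t ^ (α * (m:ℝ)) = (t ^ α) ^ m := by
        rw [← Real.rpow_natCast (t ^ α) m, ← Real.rpow_mul ht.le]
      rw [e1]
      simp only [mul_pow]
      ring
    rw [tsum_congr e, tsum_mul_left]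
    rfl
  rw [← hfinal]
  exact hmain

end Aux

/-- The Caputo fractional derivative of `τ ↦ E_{α,1}(z τ^α)` equals `z E_{α,1}(z t^α)`. -/
theorem caputo_deriv_mittagLeffler (α z t : ℝ) (hα0 : 0 < α) (hα1 : α < 1) (ht : 0 < t) :
    HasDerivAt
      (fun r : ℝ => ∫ τ in (0 : ℝ)..r,
        ((r - τ) ^ (-α) / Real.Gamma (1 - α)) *
          (mittagLeffler α (z * τ ^ α) - mittagLeffler α (z * (0 : ℝ) ^ α)))
      (z * mittagLeffler α (z * t ^ α)) t := by
  refine (deriv_G hα0 hα1 ht).congr_of_eventuallyEq ?_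
  filter_upwards [Ioi_mem_nhds ht] with r hr
  exact key hα0 hα1 hr
end
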